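/- arXiv:2006.08263 — 5 statements merged into one kernel-verified Lean document; each statement's English description precedes it below -/
import Mathlib

section
/- Let Q, Q' be homogeneous quadratic polynomials in ℂ[x₁,...,xₙ] and let r ∈ ℕ. Then there exists a linear space of linear forms V with dim(V) ≤ 8r such that for all α, β ∈ ℂ with rank_s(αQ + βQ') ≤ r, one has MS(αQ + βQ') ⊆ V. -/
open MvPolynomial

noncomputable section

/-- A linear form: a homogeneous polynomial of degree 1. -/
def IsLinearForm {n : ℕ} (l : MvPolynomial (Fin n) ℂ) : Prop :=
  l.IsHomogeneous 1

/-- A representation of `Q` as a sum of `r` products of pairs of linear forms. -/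
def IsRep {n : ℕ} (Q : MvPolynomial (Fin n) ℂ) (r : ℕ)
    (a : ℕ → MvPolynomial (Fin n) ℂ) : Prop :=
  (∀ i < 2 * r, IsLinearForm (a i)) ∧
    Q = ∑ k ∈ Finset.range r, a (2 * k) * a (2 * k + 1)

/-- `rankS Q` is the minimal `r` such that `Q` is a sum of `r` products of linear forms. -/
noncomputable def rankS {n : ℕ} (Q : MvPolynomial (Fin n) ℂ) : ℕ :=
  sInf {r | ∃ a, IsRep Q r a}

/-- The minimal space of a quadratic: the span of the linear forms in a minimal
representation (independent of the chosen minimal representation). -/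
noncomputable def MS {n : ℕ} (Q : MvPolynomial (Fin n) ℂ) :
    Submodule ℂ (MvPolynomial (Fin n) ℂ) :=
  ⨆ (a : ℕ → MvPolynomial (Fin n) ℂ) (_ : IsRep Q (rankS Q) a),
    Submodule.span ℂ (a '' Set.Iio (2 * rankS Q))

/-- A linear space whose elements are all linear forms. -/
def IsLinFormSpace {n : ℕ} (V : Submodule ℂ (MvPolynomial (Fin n) ℂ)) : Prop :=
  ∀ v ∈ V, MvPolynomial.IsHomogeneous v 1

/-- `ℂ[V]₂`: homogeneous quadratic polynomials depending only on the linear forms in `V`. -/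
noncomputable def CV2 {n : ℕ} (V : Submodule ℂ (MvPolynomial (Fin n) ℂ)) :
    Submodule ℂ (MvPolynomial (Fin n) ℂ) :=
  Subalgebra.toSubmodule (Algebra.adjoin ℂ (V : Set (MvPolynomial (Fin n) ℂ))) ⊓
    MvPolynomial.homogeneousSubmodule (Fin n) ℂ 2

/-- The EK-quadratics condition for a triple of finite sets of polynomials. -/
def EKQuadCond {n : ℕ} (T : Fin 3 → Finset (MvPolynomial (Fin n) ℂ)) : Prop :=
  (∀ i, ∀ P ∈ T i, ∀ j, ∀ Q ∈ T j, P ≠ Q → ∀ c : ℂ, Q ≠ c • P) ∧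
  (∀ i, ∀ P ∈ T i,
      (Irreducible P ∧ P.IsHomogeneous 2) ∨ ∃ l, IsLinearForm l ∧ P = l * l) ∧
  (∀ i j k : Fin 3, i ≠ j → j ≠ k → i ≠ k →
      ∀ Q₁ ∈ T i, ∀ Q₂ ∈ T j,
        (∏ Q ∈ T k, Q) ∈ (Ideal.span {Q₁, Q₂}).radical)

namespace LinRankAux

variable {n : ℕ}

lemma exists_single_of_degree_one (m : Fin n →₀ ℕ) (h : Finsupp.degree m = 1) :
    ∃ i, m = Finsupp.single i 1 := by
  classical
  have hne : m.support.Nonempty := by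
    rcases Finset.eq_empty_or_nonempty m.support with he | hne
    · exfalso
      have : m = 0 := Finsupp.support_eq_empty.mp he
      rw [this, map_zero] at h
      omega
    · exact hne
  obtain ⟨i, hi⟩ := hne
  have hmi : m i ≠ 0 := Finsupp.mem_support_iff.mp hi
  have h1 : m i + ∑ j ∈ m.support.erase i, m j = 1 := by
    rw [Finset.add_sum_erase _ _ hi]; exact h
  have hmi1 : m i = 1 := by omega
  have hz : ∑ j ∈ m.support.erase i, m j = 0 := by omega
  refine ⟨i, ?_⟩
  ext j
  rcases eq_or_ne j i with rfl | hj
  · rw [Finsupp.single_eq_same]; exact hmi1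
  · rw [Finsupp.single_eq_of_ne' (Ne.symm hj)]
    by_cases hjs : j ∈ m.support
    · exact (Finset.sum_eq_zero_iff.mp hz) j (Finset.mem_erase.mpr ⟨hj, hjs⟩)
    · exact Finsupp.notMem_support_iff.mp hjs

lemma degree_one_of_mem {g : MvPolynomial (Fin n) ℂ} (hg : g.IsHomogeneous 1)
    {m : Fin n →₀ ℕ} (hm : g.coeff m ≠ 0) : Finsupp.degree m = 1 := by
  rw [Finsupp.degree_eq_weight_one]
  exact hg hm

lemma eq_zero_of_linear {F : MvPolynomial (Fin n) ℂ} (hF : F.IsHomogeneous 1)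
    (h : ∀ i, F.coeff (Finsupp.single i 1) = 0) : F = 0 := by
  ext m
  rw [coeff_zero]
  by_contra hc
  obtain ⟨i, rfl⟩ := exists_single_of_degree_one m (degree_one_of_mem hF hc)
  exact hc (h i)

lemma pderiv_linear {g : MvPolynomial (Fin n) ℂ} (hg : g.IsHomogeneous 1) (i : Fin n) :
    pderiv i g = C (g.coeff (Finsupp.single i 1)) := by
  classical
  conv_lhs => rw [g.as_sum]
  rw [map_sum]
  have hterm : ∀ m ∈ g.support, pderiv i (monomial m (g.coeff m)) =
      if m = Finsupp.single i 1 then C (g.coeff (Finsupp.single i 1)) else 0 := by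
    intro m hm
    obtain ⟨j, rfl⟩ := exists_single_of_degree_one m
      (degree_one_of_mem hg (mem_support_iff.mp hm))
    rw [pderiv_monomial]
    rcases eq_or_ne j i with rfl | hji
    · rw [if_pos rfl]
      simp [Finsupp.single_eq_same]
    · have hne : Finsupp.single j 1 ≠ Finsupp.single i (1:ℕ) :=
        fun hc => hji ((Finsupp.single_left_inj one_ne_zero).mp hc)
      rw [if_neg hne]
      simp [Finsupp.single_eq_of_ne' hji]
  rw [Finset.sum_congr rfl hterm, Finset.sum_ite_eq' g.support (Finsupp.single i 1)]
  split_ifs with hmem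
  · rfl
  · rw [notMem_support_iff.mp hmem, map_zero]

/-- Span of the partial derivatives of `P`. -/
def DD (P : MvPolynomial (Fin n) ℂ) : Submodule ℂ (MvPolynomial (Fin n) ℂ) :=
  Submodule.span ℂ (Set.range fun i : Fin n => pderiv i P)

lemma pderiv_rep {P : MvPolynomial (Fin n) ℂ} {s : ℕ} {a : ℕ → MvPolynomial (Fin n) ℂ}
    (h : IsRep P s a) (i : Fin n) :
    pderiv i P = ∑ k ∈ Finset.range s,
      ((a (2*k)).coeff (Finsupp.single i 1) • a (2*k+1)
        + (a (2*k+1)).coeff (Finsupp.single i 1) • a (2*k)) := by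
  obtain ⟨hlin, hsum⟩ := h
  rw [hsum, map_sum]
  refine Finset.sum_congr rfl fun k hk => ?_
  have hk1 : 2*k < 2*s := by have := Finset.mem_range.mp hk; omega
  have hk2 : 2*k+1 < 2*s := by have := Finset.mem_range.mp hk; omega
  rw [pderiv_mul, pderiv_linear (hlin _ hk1) i, pderiv_linear (hlin _ hk2) i,
    smul_eq_C_mul, smul_eq_C_mul]
  ring

lemma pderiv_mem_span {P : MvPolynomial (Fin n) ℂ} {s : ℕ} {a : ℕ → MvPolynomial (Fin n) ℂ}
    (h : IsRep P s a) (i : Fin n) :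
    pderiv i P ∈ Submodule.span ℂ (a '' Set.Iio (2*s)) := by
  rw [pderiv_rep h i]
  refine Submodule.sum_mem _ fun k hk => ?_
  have hk' := Finset.mem_range.mp hk
  exact Submodule.add_mem _
    (Submodule.smul_mem _ _ (Submodule.subset_span ⟨2*k+1, by simp [Set.mem_Iio]; omega, rfl⟩))
    (Submodule.smul_mem _ _ (Submodule.subset_span ⟨2*k, by simp [Set.mem_Iio]; omega, rfl⟩))

lemma DD_le_span {P : MvPolynomial (Fin n) ℂ} {s : ℕ} {a : ℕ → MvPolynomial (Fin n) ℂ}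
    (h : IsRep P s a) : DD P ≤ Submodule.span ℂ (a '' Set.Iio (2*s)) := by
  rw [DD, Submodule.span_le]
  rintro x ⟨i, rfl⟩
  exact pderiv_mem_span h i

lemma DD_le_homog {P : MvPolynomial (Fin n) ℂ} {s : ℕ} {a : ℕ → MvPolynomial (Fin n) ℂ}
    (h : IsRep P s a) : DD P ≤ homogeneousSubmodule (Fin n) ℂ 1 := by
  refine (DD_le_span h).trans (Submodule.span_le.mpr ?_)
  rintro x ⟨j, hj, rfl⟩
  exact (mem_homogeneousSubmodule _ _).mpr (h.1 j hj)

lemma finrank_DD_le {P : MvPolynomial (Fin n) ℂ} {s : ℕ} {a : ℕ → MvPolynomial (Fin n) ℂ}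
    (h : IsRep P s a) : Module.finrank ℂ (DD P) ≤ 2 * s := by
  classical
  have himg : a '' Set.Iio (2*s) = (((Finset.range (2*s)).image a : Finset _) : Set _) := by
    ext x
    simp [Set.mem_Iio]
  have hfd : FiniteDimensional ℂ (Submodule.span ℂ (a '' Set.Iio (2*s))) := by
    rw [himg]
    exact FiniteDimensional.span_of_finite ℂ (Finset.finite_toSet _)
  refine (Submodule.finrank_mono (DD_le_span h)).trans ?_
  rw [himg]
  refine (finrank_span_finset_le_card _).trans ?_
  exact Finset.card_image_le.trans (by simp)

lemma star {P : MvPolynomial (Fin n) ℂ} {s : ℕ} {a : ℕ → MvPolynomial (Fin n) ℂ}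
    (h : IsRep P s a) (l : Module.Dual ℂ (MvPolynomial (Fin n) ℂ))
    (hl : ∀ i, l (pderiv i P) = 0) :
    ∑ k ∈ Finset.range s, (l (a (2*k+1)) • a (2*k) + l (a (2*k)) • a (2*k+1)) = 0 := by
  apply eq_zero_of_linear
  · rw [← mem_homogeneousSubmodule _ _]
    refine Submodule.sum_mem _ fun k hk => ?_
    have hk' := Finset.mem_range.mp hk
    exact Submodule.add_mem _
      (Submodule.smul_mem _ _ ((mem_homogeneousSubmodule _ _).mpr (h.1 _ (by omega))))
      (Submodule.smul_mem _ _ ((mem_homogeneousSubmodule _ _).mpr (h.1 _ (by omega))))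
  · intro i
    have h1 : l (pderiv i P) = ∑ k ∈ Finset.range s,
        ((a (2*k)).coeff (Finsupp.single i 1) * l (a (2*k+1))
          + (a (2*k+1)).coeff (Finsupp.single i 1) * l (a (2*k))) := by
      rw [pderiv_rep h i, map_sum]
      refine Finset.sum_congr rfl fun k _ => ?_
      rw [map_add, map_smul, map_smul, smul_eq_mul, smul_eq_mul]
    have h2 : (∑ k ∈ Finset.range s,
        (l (a (2*k+1)) • a (2*k) + l (a (2*k)) • a (2*k+1))).coeff (Finsupp.single i 1)
        = ∑ k ∈ Finset.range s,
        ((a (2*k)).coeff (Finsupp.single i 1) * l (a (2*k+1))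
          + (a (2*k+1)).coeff (Finsupp.single i 1) * l (a (2*k))) := by
      rw [coeff_sum]
      refine Finset.sum_congr rfl fun k _ => ?_
      rw [coeff_add, coeff_smul, coeff_smul, smul_eq_mul, smul_eq_mul]
      ring
    rw [h2, ← h1, hl i]

lemma star2 {P : MvPolynomial (Fin n) ℂ} {s : ℕ} {a : ℕ → MvPolynomial (Fin n) ℂ}
    (h : IsRep P s a) (l : Module.Dual ℂ (MvPolynomial (Fin n) ℂ))
    (hl : ∀ i, l (pderiv i P) = 0) :
    ∑ k ∈ Finset.range s, l (a (2*k)) * l (a (2*k+1)) = 0 := by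
  have h0 := congrArg l (star h l hl)
  rw [map_sum, map_zero] at h0
  have hterm : ∀ k ∈ Finset.range s,
      l (l (a (2*k+1)) • a (2*k) + l (a (2*k)) • a (2*k+1))
        = 2 * (l (a (2*k)) * l (a (2*k+1))) := by
    intro k _
    rw [map_add, map_smul, map_smul, smul_eq_mul, smul_eq_mul]
    ring
  rw [Finset.sum_congr rfl hterm, ← Finset.mul_sum] at h0
  have := mul_eq_zero.mp h0
  rcases this with h | h
  · exact absurd h two_ne_zero
  · exact h

/-- The product term used in the rank-reduction argument. -/
def TT (a : ℕ → MvPolynomial (Fin n) ℂ) (l : Module.Dual ℂ (MvPolynomial (Fin n) ℂ))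
    (c : ℂ) (L : MvPolynomial (Fin n) ℂ) (k : ℕ) : MvPolynomial (Fin n) ℂ :=
  (C c * a (2*k) - C (l (a (2*k))) * L) * (C c * a (2*k+1) - C (l (a (2*k+1))) * L)

lemma key {P : MvPolynomial (Fin n) ℂ} {s : ℕ} {a : ℕ → MvPolynomial (Fin n) ℂ}
    (h : IsRep P s a) (l : Module.Dual ℂ (MvPolynomial (Fin n) ℂ))
    (hl : ∀ i, l (pderiv i P) = 0) {k₀ : ℕ} (hk₀ : k₀ < s)
    (hc : l (a (2*k₀+1)) ≠ 0) : ∃ b, IsRep P (s-1) b := by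
  classical
  set c : ℂ := l (a (2*k₀+1)) with hcdef
  set L : MvPolynomial (Fin n) ℂ := a (2*k₀+1) with hLdef
  have rhs : C c * C c * (∑ k ∈ Finset.range s, a (2*k) * a (2*k+1))
        - C c * ((∑ k ∈ Finset.range s,
            (C (l (a (2*k+1))) * a (2*k) + C (l (a (2*k))) * a (2*k+1))) * L)
        + C (∑ k ∈ Finset.range s, l (a (2*k)) * l (a (2*k+1))) * (L * L)
      = ∑ k ∈ Finset.range s, TT a l c L k := by
    simp only [map_sum, Finset.mul_sum, Finset.sum_mul]
    rw [← Finset.sum_sub_distrib, ← Finset.sum_add_distrib]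
    refine Finset.sum_congr rfl fun k _ => ?_
    simp only [TT, map_mul]
    ring
  have hG : (∑ k ∈ Finset.range s,
      (C (l (a (2*k+1))) * a (2*k) + C (l (a (2*k))) * a (2*k+1)))
      = 0 := by
    rw [← star h l hl]
    refine Finset.sum_congr rfl fun k _ => ?_
    rw [smul_eq_C_mul, smul_eq_C_mul]
  have hTsum : ∑ k ∈ Finset.range s, TT a l c L k = C c * C c * P := by
    rw [← rhs, hG, star2 h l hl, ← h.2]
    simp
  have hT0 : TT a l c L k₀ = 0 := by
    show (C c * a (2*k₀) - C (l (a (2*k₀))) * L) *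
      (C c * a (2*k₀+1) - C (l (a (2*k₀+1))) * L) = 0
    rw [← hLdef, ← hcdef, sub_self, mul_zero]
  refine ⟨fun j => c⁻¹ • (C c * a (if j < 2*k₀ then j else j+2)
      - C (l (a (if j < 2*k₀ then j else j+2))) * L), ?_, ?_⟩
  · intro j hj
    have hj' : (if j < 2*k₀ then j else j+2) < 2*s := by split_ifs <;> omega
    show ((c⁻¹ • (C c * a (if j < 2*k₀ then j else j+2)
      - C (l (a (if j < 2*k₀ then j else j+2))) * L))).IsHomogeneous 1
    rw [← mem_homogeneousSubmodule _ _]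
    refine Submodule.smul_mem _ _ (Submodule.sub_mem _ ?_ ?_)
    · rw [← smul_eq_C_mul]
      exact Submodule.smul_mem _ _ ((mem_homogeneousSubmodule _ _).mpr (h.1 _ hj'))
    · rw [← smul_eq_C_mul]
      exact Submodule.smul_mem _ _
        ((mem_homogeneousSubmodule _ _).mpr (h.1 _ (by omega : 2*k₀+1 < 2*s)))
  · have hb : ∀ k : ℕ,
        (c⁻¹ • (C c * a (if 2*k < 2*k₀ then 2*k else 2*k+2)
            - C (l (a (if 2*k < 2*k₀ then 2*k else 2*k+2))) * L))
        * (c⁻¹ • (C c * a (if 2*k+1 < 2*k₀ then 2*k+1 else 2*k+1+2)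
            - C (l (a (if 2*k+1 < 2*k₀ then 2*k+1 else 2*k+1+2))) * L))
        = (c⁻¹ * c⁻¹) • TT a l c L (if k < k₀ then k else k+1) := by
      intro k
      have h1 : (if 2*k < 2*k₀ then 2*k else 2*k+2) = 2*(if k < k₀ then k else k+1) := by
        split_ifs <;> omega
      have h2 : (if 2*k+1 < 2*k₀ then 2*k+1 else 2*k+1+2)
          = 2*(if k < k₀ then k else k+1)+1 := by
        split_ifs <;> omega
      rw [smul_mul_smul_comm, h1, h2]
      rfl
    calc P = (c⁻¹ * c⁻¹) • (C c * C c * P) := by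
            rw [smul_eq_C_mul, map_mul,
              show (C c⁻¹ * C c⁻¹ : MvPolynomial (Fin n) ℂ) * (C c * C c * P)
                = ((C c⁻¹ * C c) * (C c⁻¹ * C c)) * P from by ring,
              ← map_mul, inv_mul_cancel₀ hc, map_one, one_mul, one_mul]
      _ = (c⁻¹ * c⁻¹) • ∑ k ∈ Finset.range s, TT a l c L k := by rw [hTsum]
      _ = (c⁻¹ * c⁻¹) • ∑ k ∈ (Finset.range s).erase k₀, TT a l c L k := by
            rw [Finset.sum_erase _ hT0]
      _ = (c⁻¹ * c⁻¹) • ∑ k ∈ Finset.range (s-1), TT a l c L (if k < k₀ then k else k+1) := by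
            congr 1
            refine (Finset.sum_bij' (fun k _ => if k < k₀ then k else k + 1)
              (fun k _ => if k < k₀ then k else k - 1) ?_ ?_ ?_ ?_ ?_).symm
            · intro k hk
              simp only [Finset.mem_erase, Finset.mem_range] at hk ⊢
              split_ifs <;> omega
            · intro k hk
              simp only [Finset.mem_erase, Finset.mem_range] at hk ⊢
              split_ifs <;> omega
            · intro k hk
              simp only [Finset.mem_range] at hk
              split_ifs <;> omega
            · intro k hk
              simp only [Finset.mem_erase, Finset.mem_range] at hk
              split_ifs <;> omega
            · intro k hk
              rfl
      _ = ∑ k ∈ Finset.range (s-1),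
            (c⁻¹ • (C c * a (if 2*k < 2*k₀ then 2*k else 2*k+2)
              - C (l (a (if 2*k < 2*k₀ then 2*k else 2*k+2))) * L))
            * (c⁻¹ • (C c * a (if 2*k+1 < 2*k₀ then 2*k+1 else 2*k+1+2)
              - C (l (a (if 2*k+1 < 2*k₀ then 2*k+1 else 2*k+1+2))) * L)) := by
            rw [Finset.smul_sum]
            exact Finset.sum_congr rfl fun k _ => (hb k).symm

lemma key' {P : MvPolynomial (Fin n) ℂ} {s : ℕ} {a : ℕ → MvPolynomial (Fin n) ℂ}
    (h : IsRep P s a) (l : Module.Dual ℂ (MvPolynomial (Fin n) ℂ))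
    (hl : ∀ i, l (pderiv i P) = 0) {k₀ : ℕ} (hk₀ : k₀ < s)
    (hc : l (a (2*k₀)) ≠ 0) : ∃ b, IsRep P (s-1) b := by
  classical
  set a' : ℕ → MvPolynomial (Fin n) ℂ := fun j =>
    if j = 2*k₀ then a (2*k₀+1) else if j = 2*k₀+1 then a (2*k₀) else a j with ha'
  have h' : IsRep P s a' := by
    constructor
    · intro j hj
      simp only [ha']
      split_ifs with h1 h2
      · exact h.1 _ (by omega)
      · exact h.1 _ (by omega)
      · exact h.1 _ hj
    · rw [h.2]
      refine Finset.sum_congr rfl fun k hk => ?_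
      simp only [ha']
      by_cases hkk : k = k₀
      · subst hkk
        rw [if_pos rfl, if_neg (by omega : ¬ (2*k+1 = 2*k)), if_pos rfl, mul_comm]
      · rw [if_neg (by omega : ¬ (2*k = 2*k₀)), if_neg (by omega : ¬ (2*k = 2*k₀+1)),
          if_neg (by omega : ¬ (2*k+1 = 2*k₀)), if_neg (by omega : ¬ (2*k+1 = 2*k₀+1))]
  refine key h' l hl hk₀ ?_
  show l (a' (2*k₀+1)) ≠ 0
  have : a' (2*k₀+1) = a (2*k₀) := by
    simp only [ha']
    rw [if_neg (by omega : ¬ (2*k₀+1 = 2*k₀))]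
    simp
  rw [this]
  exact hc

set_option synthInstance.maxHeartbeats 1000000 in
lemma forms_mem_DD {P : MvPolynomial (Fin n) ℂ} {a : ℕ → MvPolynomial (Fin n) ℂ}
    (h : IsRep P (rankS P) a) {j : ℕ} (hj : j < 2 * rankS P) : a j ∈ DD P := by
  by_contra hnot
  have hq : (DD P).mkQ (a j) ≠ 0 := by
    rw [Submodule.mkQ_apply, ne_eq, Submodule.Quotient.mk_eq_zero]
    exact hnot
  have hex : ∃ φ : Module.Dual ℂ (MvPolynomial (Fin n) ℂ ⧸ DD P),
      φ ((DD P).mkQ (a j)) ≠ 0 := by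
    by_contra hall
    push_neg at hall
    exact hq ((Module.forall_dual_apply_eq_zero_iff ℂ _).mp hall)
  obtain ⟨φ, hφ⟩ := hex
  set l : Module.Dual ℂ (MvPolynomial (Fin n) ℂ) := φ.comp (DD P).mkQ with hldef
  have hl : ∀ i, l (pderiv i P) = 0 := by
    intro i
    have hmem : pderiv i P ∈ DD P := Submodule.subset_span ⟨i, rfl⟩
    show φ ((DD P).mkQ (pderiv i P)) = 0
    rw [Submodule.mkQ_apply, (Submodule.Quotient.mk_eq_zero _).mpr hmem, map_zero]
  have hlj : l (a j) ≠ 0 := hφ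
  have hrpos : 1 ≤ rankS P := by omega
  rcases Nat.even_or_odd j with ⟨k, hk⟩ | ⟨k, hk⟩
  · obtain ⟨b, hb⟩ := key' h l hl (k₀ := k) (by omega)
      (by rw [show 2*k = j by omega]; exact hlj)
    have : rankS P ≤ rankS P - 1 := Nat.sInf_le ⟨b, hb⟩
    omega
  · obtain ⟨b, hb⟩ := key h l hl (k₀ := k) (by omega)
      (by rw [show 2*k+1 = j by omega]; exact hlj)
    have : rankS P ≤ rankS P - 1 := Nat.sInf_le ⟨b, hb⟩
    omega

lemma MS_le_DD (P : MvPolynomial (Fin n) ℂ) : MS P ≤ DD P := by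
  refine iSup_le fun a => iSup_le fun ha => Submodule.span_le.mpr ?_
  rintro x ⟨j, hj, rfl⟩
  exact forms_mem_DD ha hj

lemma DD_comb {Q Q' : MvPolynomial (Fin n) ℂ} {α β α₁ β₁ α₂ β₂ c₁ c₂ : ℂ}
    (h1 : α = c₁*α₁ + c₂*α₂) (h2 : β = c₁*β₁ + c₂*β₂) :
    DD (α • Q + β • Q') ≤ DD (α₁ • Q + β₁ • Q') ⊔ DD (α₂ • Q + β₂ • Q') := by
  rw [DD, Submodule.span_le]
  rintro x ⟨i, rfl⟩
  have hP : α • Q + β • Q' = c₁ • (α₁ • Q + β₁ • Q') + c₂ • (α₂ • Q + β₂ • Q') := by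
    subst h1 h2
    module
  have : pderiv i (α • Q + β • Q')
      = c₁ • pderiv i (α₁ • Q + β₁ • Q') + c₂ • pderiv i (α₂ • Q + β₂ • Q') := by
    rw [hP, map_add, Derivation.map_smul, Derivation.map_smul]
  dsimp only
  rw [this]
  exact Submodule.add_mem _
    (Submodule.mem_sup_left (Submodule.smul_mem _ _ (Submodule.subset_span ⟨i, rfl⟩)))
    (Submodule.mem_sup_right (Submodule.smul_mem _ _ (Submodule.subset_span ⟨i, rfl⟩)))

end LinRankAux

open LinRankAux

/-- Claim `lin-rank-r`: for homogeneous quadratics `Q, Q'` and `r ∈ ℕ`,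
there is a space `V` of linear forms of dimension at most `8r` containing the minimal space
of every linear combination `αQ + βQ'` of `rank_s` at most `r`. -/
theorem lin_rank_r (n : ℕ) (Q Q' : MvPolynomial (Fin n) ℂ)
    (hQ : Q.IsHomogeneous 2) (hQ' : Q'.IsHomogeneous 2) (r : ℕ) :
    ∃ V : Submodule ℂ (MvPolynomial (Fin n) ℂ), IsLinFormSpace V ∧
      FiniteDimensional ℂ V ∧ Module.finrank ℂ V ≤ 8 * r ∧
      ∀ α β : ℂ, rankS (α • Q + β • Q') ≤ r → MS (α • Q + β • Q') ≤ V := by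
  classical
  set Srep : ℂ → ℂ → Prop := fun α β => ∃ s a, s ≤ r ∧ IsRep (α • Q + β • Q') s a with hSrep
  have hS0 : Srep 0 0 := by
    refine ⟨0, fun _ => 0, Nat.zero_le r, ?_, by simp⟩
    intro i hi
    exact absurd hi (by omega)
  obtain ⟨α₁, β₁, α₂, β₂, h₁, h₂, hco⟩ :
      ∃ α₁ β₁ α₂ β₂, Srep α₁ β₁ ∧ Srep α₂ β₂ ∧
        ∀ α β, Srep α β → ∃ c₁ c₂, α = c₁*α₁ + c₂*α₂ ∧ β = c₁*β₁ + c₂*β₂ := by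
    by_cases hA : ∃ α₁ β₁ α₂ β₂, Srep α₁ β₁ ∧ Srep α₂ β₂ ∧ α₁*β₂ - β₁*α₂ ≠ 0
    · obtain ⟨α₁, β₁, α₂, β₂, h₁, h₂, hd⟩ := hA
      refine ⟨α₁, β₁, α₂, β₂, h₁, h₂, fun α β _ =>
        ⟨(α*β₂ - β*α₂)/(α₁*β₂ - β₁*α₂), (α₁*β - β₁*α)/(α₁*β₂ - β₁*α₂), ?_, ?_⟩⟩
      · rw [div_mul_eq_mul_div, div_mul_eq_mul_div, ← add_div, eq_div_iff hd]
        ring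
      · rw [div_mul_eq_mul_div, div_mul_eq_mul_div, ← add_div, eq_div_iff hd]
        ring
    · push_neg at hA
      by_cases hB : ∃ α₁ β₁, Srep α₁ β₁ ∧ ¬(α₁ = 0 ∧ β₁ = 0)
      · obtain ⟨α₁, β₁, h₁, hne⟩ := hB
        refine ⟨α₁, β₁, α₁, β₁, h₁, h₁, fun α β hs => ?_⟩
        have hdet : α₁*β - β₁*α = 0 := hA α₁ β₁ α β h₁ hs
        by_cases hα : α₁ = 0
        · have hβ : β₁ ≠ 0 := fun h => hne ⟨hα, h⟩
          have hα0 : α = 0 := by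
            rw [hα] at hdet
            have : β₁ * α = 0 := by linear_combination -hdet
            rcases mul_eq_zero.mp this with h | h
            · exact absurd h hβ
            · exact h
          refine ⟨β/β₁, 0, by rw [hα, hα0]; ring, by field_simp; ring⟩
        · refine ⟨α/α₁, 0, by field_simp; ring, ?_⟩
          field_simp
          linear_combination hdet
      · push_neg at hB
        exact ⟨0, 0, 0, 0, hS0, hS0, fun α β hs =>
          ⟨0, 0, by simp [(hB α β hs).1], by simp [(hB α β hs).2]⟩⟩
  obtain ⟨s₁, a₁, hs₁, hrep₁⟩ := h₁
  obtain ⟨s₂, a₂, hs₂, hrep₂⟩ := h₂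
  haveI fd1 : FiniteDimensional ℂ (DD (α₁ • Q + β₁ • Q')) :=
    FiniteDimensional.span_of_finite ℂ (Set.finite_range _)
  haveI fd2 : FiniteDimensional ℂ (DD (α₂ • Q + β₂ • Q')) :=
    FiniteDimensional.span_of_finite ℂ (Set.finite_range _)
  refine ⟨DD (α₁ • Q + β₁ • Q') ⊔ DD (α₂ • Q + β₂ • Q'), ?_, ?_, ?_, ?_⟩
  · intro v hv
    have hle : DD (α₁ • Q + β₁ • Q') ⊔ DD (α₂ • Q + β₂ • Q')
        ≤ homogeneousSubmodule (Fin n) ℂ 1 :=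
      sup_le (DD_le_homog hrep₁) (DD_le_homog hrep₂)
    exact (mem_homogeneousSubmodule _ _).mp (hle hv)
  · infer_instance
  · refine (Submodule.finrank_add_le_finrank_add_finrank _ _).trans ?_
    have e1 := finrank_DD_le hrep₁
    have e2 := finrank_DD_le hrep₂
    omega
  · intro α β hrank
    by_cases hex : ∃ a, IsRep (α • Q + β • Q') (rankS (α • Q + β • Q')) a
    · obtain ⟨a, ha⟩ := hex
      have hsmem : Srep α β :=
        show ∃ s a, s ≤ r ∧ IsRep (α • Q + β • Q') s a from
          ⟨rankS (α • Q + β • Q'), a, hrank, ha⟩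
      obtain ⟨c₁, c₂, e1, e2⟩ := hco α β hsmem
      exact (MS_le_DD _).trans (DD_comb e1 e2)
    · exact iSup_le fun a => iSup_le fun ha => (hex ⟨a, ha⟩).elim
end
end

section
/- Let P be a homogeneous irreducible quadratic polynomial in ℂ[x₁,...,xₙ], let a, b be linear forms, and let {T_i}_{i∈I} be a finite family of homogeneous quadratic polynomials such that ∏_{i∈I} T_i ∈ √⟨P, a·b⟩. Then either rank_s(P) = 2 and a ∈ MS(P), or there exists i ∈ I, a scalar α ∈ ℂ and a linear form c such that T_i = αP + a·c. -/
open MvPolynomial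

noncomputable section

namespace CaseRk1Aux
section PsiSec




variable {σ R : Type*} [CommRing R]

/-- The "grading" map: sends `X i` to `C (X i) * X`, so that the `k`-th coefficient of the image
is the `k`-th homogeneous component. -/
noncomputable def psi : MvPolynomial σ R →ₐ[R] Polynomial (MvPolynomial σ R) :=
  aeval (fun i => Polynomial.C (X i) * Polynomial.X)

lemma psi_monomial (d : σ →₀ ℕ) (c : R) :
    psi (monomial d c) = Polynomial.C (monomial d c) * Polynomial.X ^ d.degree := by
  rw [monomial_eq, Finsupp.degree]
  rw [map_mul]
  have h1 : (psi (C c) : Polynomial (MvPolynomial σ R)) = Polynomial.C (C c) := by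
    simp [psi, aeval_C, Polynomial.algebraMap_apply, algebraMap_eq]
  rw [h1]
  have h2 : psi (d.prod fun i e => (X i : MvPolynomial σ R) ^ e)
      = Polynomial.C (d.prod fun i e => (X i : MvPolynomial σ R) ^ e)
        * Polynomial.X ^ (∑ i ∈ d.support, d i) := by
    rw [show (d.prod fun i e => (X i : MvPolynomial σ R) ^ e)
        = ∏ i ∈ d.support, (X i : MvPolynomial σ R) ^ d i from rfl, map_prod]
    have : ∀ i ∈ d.support,
        psi ((X i : MvPolynomial σ R) ^ d i)
          = Polynomial.C ((X i : MvPolynomial σ R) ^ d i) * Polynomial.X ^ d i := by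
      intro i _
      rw [map_pow, psi, aeval_X, mul_pow, ← map_pow]
    rw [Finset.prod_congr rfl this, Finset.prod_mul_distrib, ← map_prod,
      Finset.prod_pow_eq_pow_sum]
  rw [h2, ← mul_assoc, ← map_mul]
  rfl

lemma coeff_psi (k : ℕ) (p : MvPolynomial σ R) :
    (psi p).coeff k = homogeneousComponent k p := by
  induction p using MvPolynomial.induction_on' with
  | monomial d c =>
    rw [psi_monomial, Polynomial.C_mul_X_pow_eq_monomial, Polynomial.coeff_monomial,
      homogeneousComponent_of_mem ((mem_homogeneousSubmodule _ _).2
        (isHomogeneous_monomial c rfl))]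
    by_cases h : k = d.degree
    · rw [if_pos h, if_pos h.symm]
    · rw [if_neg h, if_neg (Ne.symm h)]
  | add p q hp hq =>
    rw [map_add, Polynomial.coeff_add, map_add, hp, hq]

lemma psi_eq_of_isHomogeneous {p : MvPolynomial σ R} {n : ℕ} (hp : p.IsHomogeneous n) :
    psi p = Polynomial.C p * Polynomial.X ^ n := by
  ext k
  rw [coeff_psi, Polynomial.C_mul_X_pow_eq_monomial, Polynomial.coeff_monomial,
    homogeneousComponent_of_mem ((mem_homogeneousSubmodule _ _).2 hp)]
  by_cases h : k = n
  · rw [if_pos h, if_pos h.symm]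
  · rw [if_neg h, if_neg (Ne.symm h)]

lemma psi_ne_zero {p : MvPolynomial σ R} (hp : p ≠ 0) : psi p ≠ 0 := by
  intro h0
  apply hp
  have hcomp : ∀ k, homogeneousComponent k p = 0 := fun k => by
    rw [← coeff_psi, h0, Polynomial.coeff_zero]
  rw [← sum_homogeneousComponent p]
  exact Finset.sum_eq_zero fun i _ => hcomp i

lemma isHomogeneous_of_components {p : MvPolynomial σ R} {d : ℕ} (hp : p ≠ 0)
    (h : ∀ k, k ≠ d → homogeneousComponent k p = 0) : p.IsHomogeneous d := by
  by_cases hd : d ∈ Finset.range (p.totalDegree + 1)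
  · have : p = homogeneousComponent d p := by
      conv_lhs => rw [← sum_homogeneousComponent p]
      exact Finset.sum_eq_single_of_mem d hd fun b _ hb => h b hb
    rw [this]
    exact homogeneousComponent_isHomogeneous d p
  · exfalso
    apply hp
    rw [← sum_homogeneousComponent p]
    refine Finset.sum_eq_zero fun i hi => h i ?_
    rintro rfl; exact hd hi

lemma homogeneousComponent_mul_right (p : MvPolynomial σ R) {P : MvPolynomial σ R} {k : ℕ}
    (hP : P.IsHomogeneous k) (j : ℕ) :
    homogeneousComponent (j + k) (p * P) = homogeneousComponent j p * P := by
  rw [← coeff_psi, map_mul, psi_eq_of_isHomogeneous hP, ← mul_assoc,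
    Polynomial.coeff_mul_X_pow', if_pos (Nat.le_add_left k j), Nat.add_sub_cancel,
    Polynomial.coeff_mul_C, coeff_psi]

lemma factors_homogeneous [IsDomain R] {f g : MvPolynomial σ R} {N : ℕ}
    (h : (f * g).IsHomogeneous N) (hf : f ≠ 0) (hg : g ≠ 0) :
    ∃ df dg, df + dg = N ∧ f.IsHomogeneous df ∧ g.IsHomogeneous dg := by
  classical
  have hfg : f * g ≠ 0 := mul_ne_zero hf hg
  have hM : psi f * psi g = Polynomial.monomial N (f * g) := by
    rw [← map_mul, psi_eq_of_isHomogeneous h, Polynomial.C_mul_X_pow_eq_monomial]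
  have hdeg : (psi f).natDegree + (psi g).natDegree = N := by
    rw [← Polynomial.natDegree_mul (psi_ne_zero hf) (psi_ne_zero hg), hM,
      Polynomial.natDegree_monomial, if_neg hfg]
  have htr : (psi f).natTrailingDegree + (psi g).natTrailingDegree = N := by
    rw [← Polynomial.natTrailingDegree_mul (psi_ne_zero hf) (psi_ne_zero hg), hM,
      Polynomial.natTrailingDegree_monomial hfg]
  have hle1 := Polynomial.natTrailingDegree_le_natDegree (psi f)
  have hle2 := Polynomial.natTrailingDegree_le_natDegree (psi g)
  have h1 : (psi f).natTrailingDegree = (psi f).natDegree := by omega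
  have h2 : (psi g).natTrailingDegree = (psi g).natDegree := by omega
  refine ⟨(psi f).natDegree, (psi g).natDegree, hdeg, ?_, ?_⟩
  · refine isHomogeneous_of_components hf fun k hk => ?_
    rw [← coeff_psi]
    rcases lt_or_gt_of_ne hk with hlt | hgt
    · exact Polynomial.coeff_eq_zero_of_lt_natTrailingDegree (by omega)
    · exact Polynomial.coeff_eq_zero_of_natDegree_lt hgt
  · refine isHomogeneous_of_components hg fun k hk => ?_
    rw [← coeff_psi]
    rcases lt_or_gt_of_ne hk with hlt | hgt
    · exact Polynomial.coeff_eq_zero_of_lt_natTrailingDegree (by omega)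
    · exact Polynomial.coeff_eq_zero_of_natDegree_lt hgt


end PsiSec
section KillSec




variable {R : Type*} [CommRing R] {m : ℕ}

/-- Substitution that kills the variable `X 0`. -/
noncomputable def killX0 : MvPolynomial (Fin (m + 1)) R →ₐ[R] MvPolynomial (Fin m) R :=
  aeval (Fin.cases 0 X)

lemma killX0_rename (q : MvPolynomial (Fin m) R) : killX0 (rename Fin.succ q) = q := by
  rw [killX0, aeval_rename]
  have h : (Fin.cases 0 X : Fin (m + 1) → MvPolynomial (Fin m) R) ∘ Fin.succ = X := by
    funext j; simp
  rw [h, aeval_X_left_apply]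

lemma killX0_X_zero : killX0 (X (0 : Fin (m + 1)) : MvPolynomial (Fin (m + 1)) R) = 0 := by
  simp [killX0]

lemma sub_rename_killX0_mem (g : MvPolynomial (Fin (m + 1)) R) :
    g - rename Fin.succ (killX0 g) ∈ Ideal.span {(X 0 : MvPolynomial (Fin (m + 1)) R)} := by
  induction g using MvPolynomial.induction_on with
  | C c =>
    have h1 : killX0 (C c : MvPolynomial (Fin (m + 1)) R) = C c := by
      simp [killX0]
    rw [h1, rename_C, sub_self]
    exact zero_mem _
  | add p q hp hq =>
    have : p + q - rename Fin.succ (killX0 (p + q))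
        = (p - rename Fin.succ (killX0 p)) + (q - rename Fin.succ (killX0 q)) := by
      rw [map_add, map_add]; ring
    rw [this]; exact add_mem hp hq
  | mul_X p i hp =>
    induction i using Fin.cases with
    | zero =>
      have h1 : killX0 (p * X (0 : Fin (m + 1))) = 0 := by
        rw [map_mul, killX0_X_zero, mul_zero]
      rw [h1, map_zero, sub_zero]
      exact Ideal.mul_mem_left _ p (Ideal.subset_span rfl)
    | succ j =>
      have h1 : killX0 (p * X (Fin.succ j)) = killX0 p * X j := by
        rw [map_mul, killX0, aeval_X]; simp
      have h2 : p * X (Fin.succ j) - rename Fin.succ (killX0 (p * X (Fin.succ j)))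
          = (p - rename Fin.succ (killX0 p)) * X (Fin.succ j) := by
        rw [h1, map_mul, rename_X]; ring
      rw [h2]
      exact Ideal.mul_mem_right _ _ hp

lemma mem_span_X0_of_killX0_eq_zero {g : MvPolynomial (Fin (m + 1)) R} (hg : killX0 g = 0) :
    g ∈ Ideal.span {(X 0 : MvPolynomial (Fin (m + 1)) R)} := by
  have h := sub_rename_killX0_mem g
  rwa [hg, map_zero, sub_zero] at h

lemma span_pair_eq_comap (P : MvPolynomial (Fin (m + 1)) R) :
    Ideal.span {P, X 0} = Ideal.comap killX0 (Ideal.span {killX0 P}) := by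
  apply le_antisymm
  · rw [Ideal.span_le]
    rintro x hx
    rcases hx with rfl | hx
    · exact Ideal.mem_comap.2 (Ideal.subset_span rfl)
    · rcases hx with rfl
      rw [SetLike.mem_coe, Ideal.mem_comap, killX0_X_zero]
      exact zero_mem _
  · intro g hg
    rw [Ideal.mem_comap, Ideal.mem_span_singleton] at hg
    obtain ⟨h, hh⟩ := hg
    have h1 : killX0 (g - rename Fin.succ h * P) = 0 := by
      rw [map_sub, map_mul, killX0_rename, hh]; ring
    have h2 := mem_span_X0_of_killX0_eq_zero h1
    have h3 : g = (g - rename Fin.succ h * P) + rename Fin.succ h * P := by ring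
    rw [h3]
    refine add_mem (Ideal.span_mono ?_ h2) (Ideal.mul_mem_left _ _ (Ideal.subset_span ?_))
    · intro x hx; rcases hx with rfl; right; rfl
    · left; rfl

lemma mem_radical_comap {F A B : Type*} [CommRing A] [CommRing B] [FunLike F A B]
    [RingHomClass F A B] (f : F) (J : Ideal B) (x : A) :
    x ∈ (Ideal.comap f J).radical ↔ f x ∈ J.radical := by
  constructor
  · rintro ⟨k, hk⟩
    exact ⟨k, by rw [← map_pow]; exact Ideal.mem_comap.1 hk⟩
  · rintro ⟨k, hk⟩
    exact ⟨k, Ideal.mem_comap.2 (by rw [map_pow]; exact hk)⟩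


end KillSec
section AutoSec




lemma degree_one_eq_single {σ : Type*} {d : σ →₀ ℕ} (h : d.degree = 1) :
    ∃ j, d = Finsupp.single j 1 := by
  classical
  have hd0 : d ≠ 0 := by rintro rfl; simp [map_zero] at h
  obtain ⟨j, hj⟩ := Finsupp.support_nonempty_iff.2 hd0
  refine ⟨j, ?_⟩
  have hj1 : 1 ≤ d j := Nat.one_le_iff_ne_zero.2 (Finsupp.mem_support_iff.1 hj)
  rw [Finsupp.eq_single_iff]
  constructor
  · intro i hi
    by_contra hij
    simp only [Finset.mem_singleton] at hij
    have hi1 : 1 ≤ d i := Nat.one_le_iff_ne_zero.2 (Finsupp.mem_support_iff.1 hi)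
    have hsub : ({i, j} : Finset σ) ⊆ d.support := by
      intro x hx
      rcases Finset.mem_insert.1 hx with rfl | hx
      · exact hi
      · rwa [Finset.mem_singleton.1 hx]
    have h2 : d i + d j ≤ d.degree := by
      calc d i + d j = ∑ x ∈ ({i, j} : Finset σ), d x := by
            rw [Finset.sum_pair hij]
        _ ≤ ∑ x ∈ d.support, d x := Finset.sum_le_sum_of_subset hsub
        _ = d.degree := rfl
    omega
  · have h3 : d j ≤ d.degree := Finset.single_le_sum (fun _ _ => Nat.zero_le _) hj
    omega

lemma degree_single' {σ : Type*} (j : σ) : (Finsupp.single j 1).degree = 1 := by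
  simp [Finsupp.degree_apply, Finsupp.support_single_ne_zero j one_ne_zero]

variable {K : Type*} [Field K] {n : ℕ}

lemma linear_eq_sum (l : MvPolynomial (Fin n) K) (hl : l.IsHomogeneous 1) :
    l = ∑ j : Fin n, C (coeff (Finsupp.single j 1) l) * X j := by
  ext d
  rw [coeff_sum]
  by_cases hd : d.degree = 1
  · obtain ⟨j₀, rfl⟩ := degree_one_eq_single hd
    rw [Finset.sum_eq_single j₀]
    · rw [coeff_C_mul, coeff_X', if_pos rfl, mul_one]
    · intro j _ hj
      rw [coeff_C_mul, coeff_X', if_neg, mul_zero]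
      intro hs
      exact hj (by simpa using (Finsupp.single_left_injective one_ne_zero) hs)
    · intro hj; exact absurd (Finset.mem_univ j₀) hj
  · rw [hl.coeff_eq_zero hd]
    refine (Finset.sum_eq_zero fun j _ => ?_).symm
    rw [coeff_C_mul, coeff_X', if_neg, mul_zero]
    rintro rfl
    exact hd (degree_single' j)

lemma not_isUnit_of_isHomogeneous {p : MvPolynomial (Fin n) K} {d : ℕ}
    (hp : p.IsHomogeneous d) (hd : d ≠ 0) : ¬IsUnit p := by
  intro hu
  have h1 : IsUnit (constantCoeff p) := hu.map constantCoeff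
  have h2 : constantCoeff p = 0 := by
    rw [constantCoeff_eq]
    exact hp.coeff_eq_zero (by simpa [map_zero] using (Ne.symm hd))
  rw [h2] at h1
  exact not_isUnit_zero h1

/-- Transport of irreducibility along a pair of mutually inverse algebra maps. -/
lemma irreducible_transport {A B : Type*} [CommRing A] [CommRing B]
    (Φ : A →+* B) (Ψ : B →+* A) (hΦΨ : ∀ x, Φ (Ψ x) = x) (hΨΦ : ∀ x, Ψ (Φ x) = x)
    {P : A} (hP : Irreducible P) : Irreducible (Φ P) := by
  constructor
  · intro hu
    have := hu.map Ψ
    rw [hΨΦ] at this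
    exact hP.not_isUnit this
  · intro x y hxy
    have h1 : P = Ψ x * Ψ y := by
      rw [← hΨΦ P, hxy, map_mul]
    rcases hP.isUnit_or_isUnit h1 with h | h
    · left; have := h.map Φ; rwa [hΦΨ] at this
    · right; have := h.map Φ; rwa [hΦΨ] at this

/-- Existence of an automorphism (given as a pair of mutually inverse algebra homs)
sending `X 0` to a given nonzero linear form, and preserving homogeneity both ways. -/
lemma exists_autom {m : ℕ} (a : MvPolynomial (Fin (m + 1)) K)
    (ha : a.IsHomogeneous 1) (ha0 : a ≠ 0) :
    ∃ Φ Ψ : MvPolynomial (Fin (m + 1)) K →ₐ[K] MvPolynomial (Fin (m + 1)) K,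
      (∀ x, Φ (Ψ x) = x) ∧ (∀ x, Ψ (Φ x) = x) ∧ Φ (X 0) = a ∧
      (∀ (p : MvPolynomial (Fin (m + 1)) K) (k : ℕ), p.IsHomogeneous k →
        (Φ p).IsHomogeneous k) ∧
      (∀ (p : MvPolynomial (Fin (m + 1)) K) (k : ℕ), p.IsHomogeneous k →
        (Ψ p).IsHomogeneous k) := by
  classical
  have hex : ∃ i₀, coeff (Finsupp.single i₀ 1) a ≠ 0 := by
    by_contra hco
    push_neg at hco
    apply ha0
    rw [linear_eq_sum a ha]
    refine Finset.sum_eq_zero fun j _ => by rw [hco j, map_zero, zero_mul]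
  obtain ⟨i₀, hi₀⟩ := hex
  set e : Equiv.Perm (Fin (m + 1)) := Equiv.swap 0 i₀ with he
  set a₁ : MvPolynomial (Fin (m + 1)) K := rename (⇑e) a with ha₁def
  have ha₁ : a₁.IsHomogeneous 1 := ha.rename_isHomogeneous
  have hc1 : coeff (Finsupp.single (0 : Fin (m + 1)) 1) a₁ ≠ 0 := by
    have hmd : Finsupp.mapDomain (⇑e) (Finsupp.single i₀ 1)
        = Finsupp.single (0 : Fin (m + 1)) 1 := by
      rw [Finsupp.mapDomain_single, he]
      simp [Equiv.swap_apply_right]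
    rw [ha₁def, ← hmd, coeff_rename_mapDomain _ e.injective]
    exact hi₀
  set c1 : K := coeff (Finsupp.single (0 : Fin (m + 1)) 1) a₁ with hc1def
  set r : MvPolynomial (Fin (m + 1)) K :=
    ∑ j ∈ Finset.univ.erase 0, C (coeff (Finsupp.single j 1) a₁) * X j with hrdef
  have ha₁eq : a₁ = C c1 * X 0 + r := by
    conv_lhs => rw [linear_eq_sum a₁ ha₁]
    rw [hrdef, hc1def, ← Finset.add_sum_erase Finset.univ _ (Finset.mem_univ 0)]
  have hr : r.IsHomogeneous 1 := by
    rw [hrdef]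
    exact IsHomogeneous.sum _ _ _ fun j _ => (isHomogeneous_X _ _).C_mul _
  set F : Fin (m + 1) → MvPolynomial (Fin (m + 1)) K :=
    fun j => if j = 0 then a₁ else X j with hFdef
  set G : Fin (m + 1) → MvPolynomial (Fin (m + 1)) K :=
    fun j => if j = 0 then C c1⁻¹ * (X 0 - r) else X j with hGdef
  have hF0 : F 0 = a₁ := by simp [hFdef]
  have hFne : ∀ j, j ≠ 0 → F j = X j := fun j hj => by simp [hFdef, hj]
  have hG0 : G 0 = C c1⁻¹ * (X 0 - r) := by simp [hGdef]
  have hGne : ∀ j, j ≠ 0 → G j = X j := fun j hj => by simp [hGdef, hj]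
  have hF : ∀ j, (F j).IsHomogeneous 1 := by
    intro j
    by_cases h : j = 0
    · rw [h, hF0]; exact ha₁
    · rw [hFne j h]; exact isHomogeneous_X _ _
  have hG : ∀ j, (G j).IsHomogeneous 1 := by
    intro j
    by_cases h : j = 0
    · rw [h, hG0]; exact ((isHomogeneous_X _ _).sub hr).C_mul _
    · rw [hGne j h]; exact isHomogeneous_X _ _
  have haevalC : ∀ (H : Fin (m + 1) → MvPolynomial (Fin (m + 1)) K) (x : K),
      aeval H (C x) = C x := by
    intro H x
    rw [aeval_C, algebraMap_eq]
  have haevalFr : aeval F r = r := by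
    rw [hrdef, map_sum]
    refine Finset.sum_congr rfl fun j hj => ?_
    rw [map_mul, haevalC, aeval_X, hFne j (Finset.mem_erase.1 hj).1]
  have haevalGr : aeval G r = r := by
    rw [hrdef, map_sum]
    refine Finset.sum_congr rfl fun j hj => ?_
    rw [map_mul, haevalC, aeval_X, hGne j (Finset.mem_erase.1 hj).1]
  have hCC : (C c1 : MvPolynomial (Fin (m + 1)) K) * C c1⁻¹ = 1 := by
    rw [← map_mul, mul_inv_cancel₀ hc1, map_one]
  have hGF : ∀ j, aeval F (G j) = X j := by
    intro j
    by_cases h : j = 0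
    · subst h
      rw [hG0, map_mul, haevalC, map_sub, aeval_X, haevalFr, hF0, ha₁eq,
        show C c1 * X (0 : Fin (m+1)) + r - r = C c1 * X 0 by ring,
        show (C c1⁻¹ : MvPolynomial (Fin (m+1)) K) * (C c1 * X 0) = (C c1 * C c1⁻¹) * X 0
          by ring, hCC, one_mul]
    · rw [hGne j h, aeval_X, hFne j h]
  have hFG : ∀ j, aeval G (F j) = X j := by
    intro j
    by_cases h : j = 0
    · subst h
      rw [hF0, ha₁eq, map_add, map_mul, haevalC, aeval_X, haevalGr, hG0,
        show C c1 * (C c1⁻¹ * (X (0 : Fin (m+1)) - r)) + r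
          = (C c1 * C c1⁻¹) * (X 0 - r) + r by ring, hCC]
      ring
    · rw [hFne j h, aeval_X, hGne j h]
  set Φ : MvPolynomial (Fin (m + 1)) K →ₐ[K] MvPolynomial (Fin (m + 1)) K :=
    (rename (⇑e.symm)).comp (aeval F) with hΦdef
  set Ψ : MvPolynomial (Fin (m + 1)) K →ₐ[K] MvPolynomial (Fin (m + 1)) K :=
    (aeval G).comp (rename (⇑e)) with hΨdef
  have hΦapp : ∀ x, Φ x = rename (⇑e.symm) (aeval F x) := fun x => rfl
  have hΨapp : ∀ x, Ψ x = aeval G (rename (⇑e) x) := fun x => rfl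
  have hΦX : ∀ j, Φ (X j) = rename (⇑e.symm) (F j) := by
    intro j; rw [hΦapp, aeval_X]
  have hΨX : ∀ j, Ψ (X j) = G (e j) := by
    intro j; rw [hΨapp, rename_X, aeval_X]
  have hΦΨ : ∀ x, Φ (Ψ x) = x := by
    have hcomp : Φ.comp Ψ = AlgHom.id K _ := by
      apply algHom_ext
      intro j
      rw [AlgHom.comp_apply, AlgHom.id_apply, hΨX j]
      by_cases h : e j = 0
      · rw [h, hΦapp, hGF 0, rename_X,
          show e.symm 0 = j from by rw [← h, Equiv.symm_apply_apply]]
      · rw [hGne _ h, hΦX, hFne _ h, rename_X, Equiv.symm_apply_apply]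
    intro x
    calc Φ (Ψ x) = (Φ.comp Ψ) x := rfl
      _ = x := by rw [hcomp, AlgHom.id_apply]
  have hΨΦ : ∀ x, Ψ (Φ x) = x := by
    have hcomp : Ψ.comp Φ = AlgHom.id K _ := by
      apply algHom_ext
      intro j
      rw [AlgHom.comp_apply, AlgHom.id_apply, hΦX j]
      by_cases h : j = 0
      · subst h
        rw [hF0, hΨapp, rename_rename, Equiv.self_comp_symm, rename_id, AlgHom.id_apply, ← hF0, hFG 0]
      · rw [hFne j h, rename_X, hΨX, Equiv.apply_symm_apply, hGne j h]
    intro x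
    calc Ψ (Φ x) = (Ψ.comp Φ) x := rfl
      _ = x := by rw [hcomp, AlgHom.id_apply]
  refine ⟨Φ, Ψ, hΦΨ, hΨΦ, ?_, ?_, ?_⟩
  · rw [hΦX 0, hF0, ha₁def, rename_rename, Equiv.symm_comp_self, rename_id, AlgHom.id_apply]
  · intro p k hp
    rw [hΦapp]
    have h1 : (aeval F p).IsHomogeneous (1 * k) := hp.aeval F hF
    rw [one_mul] at h1
    exact h1.rename_isHomogeneous
  · intro p k hp
    rw [hΨapp]
    have h1 : (rename (⇑e) p).IsHomogeneous k := hp.rename_isHomogeneous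
    have h2 : (aeval G (rename (⇑e) p)).IsHomogeneous (1 * k) := h1.aeval G hG
    rwa [one_mul] at h2


end AutoSec
end CaseRk1Aux

open CaseRk1Aux


section MainAux

open CaseRk1Aux

/-- If an irreducible `P` can be written as `l * m' + a * c` with all four factors linear
forms, then `rankS P = 2` and `a ∈ MS P`. -/
lemma rank_two_of_rep {n : ℕ} {P l m' a c : MvPolynomial (Fin n) ℂ}
    (hP : Irreducible P) (hl : IsLinearForm l) (hm : IsLinearForm m')
    (ha : IsLinearForm a) (hc : IsLinearForm c) (heq : P = l * m' + a * c) :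
    rankS P = 2 ∧ a ∈ MS P := by
  classical
  set u : ℕ → MvPolynomial (Fin n) ℂ :=
    fun k => if k = 0 then l else if k = 1 then m' else if k = 2 then a else c with hu
  have h0 : u 0 = l := by simp [hu]
  have h1 : u 1 = m' := by simp [hu]
  have h2 : u 2 = a := by simp [hu]
  have h3 : u 3 = c := by simp [hu]
  have hrep : IsRep P 2 u := by
    constructor
    · intro i hi
      interval_cases i
      · rw [h0]; exact hl
      · rw [h1]; exact hm
      · rw [h2]; exact ha
      · rw [h3]; exact hc
    · rw [Finset.sum_range_succ, Finset.sum_range_one]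
      norm_num
      rw [h0, h1, h2, h3]
      exact heq
  have hle : rankS P ≤ 2 := Nat.sInf_le ⟨u, hrep⟩
  have hmem : rankS P ∈ {r | ∃ a, IsRep P r a} := Nat.sInf_mem ⟨2, u, hrep⟩
  obtain ⟨w, hw⟩ := hmem
  have hr0 : rankS P ≠ 0 := by
    intro h
    rw [h] at hw
    have hw2 := hw.2
    rw [Finset.range_zero, Finset.sum_empty] at hw2
    exact hP.ne_zero hw2
  have hr1 : rankS P ≠ 1 := by
    intro h
    rw [h] at hw
    have hw2 := hw.2
    rw [Finset.sum_range_one] at hw2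
    norm_num at hw2
    rcases hP.isUnit_or_isUnit hw2 with hun | hun
    · exact not_isUnit_of_isHomogeneous (hw.1 0 (by norm_num)) one_ne_zero hun
    · exact not_isUnit_of_isHomogeneous (hw.1 1 (by norm_num)) one_ne_zero hun
  have hr2 : rankS P = 2 := by omega
  refine ⟨hr2, ?_⟩
  have hrep' : IsRep P (rankS P) u := by rw [hr2]; exact hrep
  have hspan : a ∈ Submodule.span ℂ (u '' Set.Iio (2 * rankS P)) := by
    apply Submodule.subset_span
    refine ⟨2, ?_, h2⟩
    rw [hr2]
    norm_num
  exact Submodule.mem_iSup_of_mem u (Submodule.mem_iSup_of_mem hrep' hspan)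

/-- The key dichotomy in coordinates where the linear form is `X 0`. -/
lemma key_dichotomy {m : ℕ} (P : MvPolynomial (Fin (m + 1)) ℂ) (hP : Irreducible P)
    (hP2 : P.IsHomogeneous 2) {ι : Type*} (s : Finset ι)
    (T : ι → MvPolynomial (Fin (m + 1)) ℂ)
    (hT : ∀ i ∈ s, (T i).IsHomogeneous 2)
    (hprod : (∏ i ∈ s, T i) ∈ (Ideal.span {P, X 0}).radical) :
    (∃ l m' c, IsLinearForm l ∧ IsLinearForm m' ∧ IsLinearForm c ∧
        P = l * m' + X 0 * c) ∨
      ∃ i ∈ s, ∃ (α : ℂ) (c : MvPolynomial (Fin (m + 1)) ℂ), IsLinearForm c ∧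
        T i = α • P + X 0 * c := by
  classical
  set Q : MvPolynomial (Fin m) ℂ := killX0 P with hQdef
  have hkill : ∀ i : Fin (m + 1),
      ((Fin.cases 0 X : Fin (m + 1) → MvPolynomial (Fin m) ℂ) i).IsHomogeneous 1 := by
    intro i
    induction i using Fin.cases with
    | zero => simpa using isHomogeneous_zero (Fin m) ℂ 1
    | succ j => simpa using isHomogeneous_X ℂ j
  have hQhom : Q.IsHomogeneous 2 := by
    have h := hP2.aeval (Fin.cases 0 X) hkill
    rwa [one_mul] at h
  have hQ0 : Q ≠ 0 := by
    intro h
    have hmem := mem_span_X0_of_killX0_eq_zero (hQdef ▸ h)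
    rw [Ideal.mem_span_singleton] at hmem
    obtain ⟨w, hPw⟩ := hmem
    have hw0 : w ≠ 0 := by rintro rfl; rw [mul_zero] at hPw; exact hP.ne_zero hPw
    obtain ⟨dX, dw, hsum, hXh, hwh⟩ :=
      factors_homogeneous (N := 2) (by rw [← hPw]; exact hP2) (X_ne_zero 0) hw0
    have hdX : dX = 1 := ((isHomogeneous_X ℂ (0 : Fin (m + 1))).inj_right hXh (X_ne_zero 0)).symm
    rcases hP.isUnit_or_isUnit hPw with hun | hun
    · exact not_isUnit_of_isHomogeneous (isHomogeneous_X ℂ (0 : Fin (m + 1))) one_ne_zero hun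
    · exact not_isUnit_of_isHomogeneous hwh (by omega) hun
  by_cases hirr : Irreducible Q
  · right
    have hQprime : Prime Q := UniqueFactorizationMonoid.irreducible_iff_prime.mp hirr
    haveI hprime : (Ideal.span {Q}).IsPrime := (Ideal.span_singleton_prime hQ0).2 hQprime
    have hmem : killX0 (∏ i ∈ s, T i) ∈ (Ideal.span {Q}).radical := by
      rw [← mem_radical_comap (killX0 (R := ℂ) (m := m)), ← span_pair_eq_comap]
      exact hprod
    rw [hprime.radical, map_prod] at hmem
    obtain ⟨i, hi, hTi⟩ := Ideal.IsPrime.prod_mem_iff.1 hmem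
    have hTimem : T i ∈ Ideal.span {P, (X 0 : MvPolynomial (Fin (m + 1)) ℂ)} := by
      rw [span_pair_eq_comap, Ideal.mem_comap]
      exact hTi
    rw [Ideal.mem_span_pair] at hTimem
    obtain ⟨u, v, huv⟩ := hTimem
    have hTi2 : homogeneousComponent 2 (T i) = T i := by
      rw [homogeneousComponent_of_mem ((mem_homogeneousSubmodule _ _).2 (hT i hi)), if_pos rfl]
    have e1 : homogeneousComponent 2 (u * P) = C (coeff 0 u) * P := by
      have h := homogeneousComponent_mul_right u hP2 0
      norm_num at h
      exact h
    have e2 : homogeneousComponent 2 (v * X 0) =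
        homogeneousComponent 1 v * X (0 : Fin (m + 1)) := by
      have h := homogeneousComponent_mul_right v (isHomogeneous_X ℂ (0 : Fin (m + 1))) 1
      norm_num at h
      exact h
    refine ⟨i, hi, coeff 0 u, homogeneousComponent 1 v,
      homogeneousComponent_isHomogeneous 1 v, ?_⟩
    calc T i = homogeneousComponent 2 (T i) := hTi2.symm
      _ = homogeneousComponent 2 (u * P + v * X 0) := by rw [huv]
      _ = homogeneousComponent 2 (u * P) + homogeneousComponent 2 (v * X 0) := by
          rw [map_add]
      _ = C (coeff 0 u) * P + homogeneousComponent 1 v * X 0 := by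
          rw [e1, e2]
      _ = coeff 0 u • P + X 0 * homogeneousComponent 1 v := by
          rw [smul_eq_C_mul, mul_comm (homogeneousComponent 1 v)]
  · left
    have hQnotunit : ¬IsUnit Q := not_isUnit_of_isHomogeneous hQhom two_ne_zero
    obtain ⟨f, g, hfg, hfn, hgn⟩ : ∃ f g, Q = f * g ∧ ¬IsUnit f ∧ ¬IsUnit g := by
      rw [irreducible_iff] at hirr
      push_neg at hirr
      exact hirr hQnotunit
    have hf0 : f ≠ 0 := by rintro rfl; rw [zero_mul] at hfg; exact hQ0 hfg
    have hg0 : g ≠ 0 := by rintro rfl; rw [mul_zero] at hfg; exact hQ0 hfg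
    obtain ⟨df, dg, hsum, hfh, hgh⟩ :=
      factors_homogeneous (N := 2) (by rw [← hfg]; exact hQhom) hf0 hg0
    have hdf : df ≠ 0 := by
      intro h
      subst h
      have hfc : f = C (coeff 0 f) := by
        have hco := homogeneousComponent_of_mem ((mem_homogeneousSubmodule _ _).2 hfh)
          (m := 0)
        rw [if_pos rfl] at hco
        conv_lhs => rw [← hco]
        rw [homogeneousComponent_zero]
      have : IsUnit f := by
        rw [hfc]
        exact (Ne.isUnit (by rintro h0; rw [h0, map_zero] at hfc; exact hf0 hfc)).map
          (C : ℂ →+* MvPolynomial (Fin m) ℂ)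
      exact hfn this
    have hdg : dg ≠ 0 := by
      intro h
      subst h
      have hgc : g = C (coeff 0 g) := by
        have hco := homogeneousComponent_of_mem ((mem_homogeneousSubmodule _ _).2 hgh)
          (m := 0)
        rw [if_pos rfl] at hco
        conv_lhs => rw [← hco]
        rw [homogeneousComponent_zero]
      have : IsUnit g := by
        rw [hgc]
        exact (Ne.isUnit (by rintro h0; rw [h0, map_zero] at hgc; exact hg0 hgc)).map
          (C : ℂ →+* MvPolynomial (Fin m) ℂ)
      exact hgn this
    have hdf1 : df = 1 := by omega
    have hdg1 : dg = 1 := by omega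
    subst hdf1; subst hdg1
    set L : MvPolynomial (Fin (m + 1)) ℂ := rename Fin.succ f with hL
    set M : MvPolynomial (Fin (m + 1)) ℂ := rename Fin.succ g with hM
    have hLh : L.IsHomogeneous 1 := hfh.rename_isHomogeneous
    have hMh : M.IsHomogeneous 1 := hgh.rename_isHomogeneous
    have hkillLM : killX0 (P - L * M) = 0 := by
      rw [map_sub, map_mul, hL, hM, killX0_rename, killX0_rename, ← hQdef, hfg, sub_self]
    have hmem := mem_span_X0_of_killX0_eq_zero hkillLM
    rw [Ideal.mem_span_singleton] at hmem
    obtain ⟨w, hw⟩ := hmem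
    have hsub2 : (P - L * M).IsHomogeneous 2 := hP2.sub (by
      have := hLh.mul hMh
      norm_num at this
      exact this)
    have hcomp : P - L * M = homogeneousComponent 1 w * X 0 := by
      have hco := homogeneousComponent_of_mem ((mem_homogeneousSubmodule _ _).2 hsub2)
        (m := 2)
      rw [if_pos rfl] at hco
      have h := homogeneousComponent_mul_right w (isHomogeneous_X ℂ (0 : Fin (m + 1))) 1
      norm_num at h
      rw [← hco, hw, mul_comm (X (0 : Fin (m + 1))) w, h]
    refine ⟨L, M, homogeneousComponent 1 w, hLh, hMh,
      homogeneousComponent_isHomogeneous 1 w, ?_⟩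
    rw [mul_comm (X (0 : Fin (m + 1)))]
    rw [← hcomp]
    ring

end MainAux

/-- Claim `case-rk1-gen`: if `P` is an irreducible homogeneous quadratic,
`a, b` are linear forms and a finite product of homogeneous quadratics `T i` lies in
`√⟨P, a·b⟩`, then either `rank_s P = 2` and `a ∈ MS(P)`, or some `T i = αP + a·c` for a
scalar `α` and a linear form `c`. -/
theorem case_rk1_gen (n : ℕ) (P : MvPolynomial (Fin n) ℂ)
    (hP : Irreducible P) (hP2 : P.IsHomogeneous 2)
    (a b : MvPolynomial (Fin n) ℂ) (ha : IsLinearForm a) (hb : IsLinearForm b)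
    {ι : Type*} (s : Finset ι) (T : ι → MvPolynomial (Fin n) ℂ)
    (hT : ∀ i ∈ s, (T i).IsHomogeneous 2)
    (hprod : (∏ i ∈ s, T i) ∈ (Ideal.span {P, a * b}).radical) :
    (rankS P = 2 ∧ a ∈ MS P) ∨
      ∃ i ∈ s, ∃ (α : ℂ) (c : MvPolynomial (Fin n) ℂ),
        IsLinearForm c ∧ T i = α • P + a * c := by
  classical
  by_cases ha0 : a = 0
  · right
    subst ha0
    rw [zero_mul] at hprod
    have hspan : Ideal.span ({P, 0} : Set (MvPolynomial (Fin n) ℂ)) = Ideal.span {P} := by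
      rw [Set.pair_comm]
      exact Submodule.span_insert_zero
    have hPprime : Prime P := UniqueFactorizationMonoid.irreducible_iff_prime.mp hP
    haveI hpr : (Ideal.span {P}).IsPrime := (Ideal.span_singleton_prime hP.ne_zero).2 hPprime
    rw [hspan, hpr.radical] at hprod
    obtain ⟨i, hi, hTi⟩ := Ideal.IsPrime.prod_mem_iff.1 hprod
    rw [Ideal.mem_span_singleton] at hTi
    obtain ⟨u, hu⟩ := hTi
    by_cases hTi0 : T i = 0
    · refine ⟨i, hi, 0, 0, isHomogeneous_zero _ _ _, ?_⟩
      rw [hTi0, zero_smul, mul_zero, add_zero]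
    · have hu0 : u ≠ 0 := by rintro rfl; rw [mul_zero] at hu; exact hTi0 hu
      obtain ⟨dP, du, hsum, hPh, huh⟩ := CaseRk1Aux.factors_homogeneous (N := 2)
        (by rw [← hu]; exact hT i hi) hP.ne_zero hu0
      have hdP : dP = 2 := hPh.inj_right hP2 hP.ne_zero
      have hdu : du = 0 := by omega
      subst hdu
      have huc : u = C (coeff 0 u) := by
        have hco := homogeneousComponent_of_mem ((mem_homogeneousSubmodule _ _).2 huh)
          (m := 0)
        rw [if_pos rfl] at hco
        conv_lhs => rw [← hco]
        rw [homogeneousComponent_zero]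
      refine ⟨i, hi, coeff 0 u, 0, isHomogeneous_zero _ _ _, ?_⟩
      rw [mul_zero, add_zero, smul_eq_C_mul, hu]
      conv_lhs => rw [huc]
      rw [mul_comm]
  · have hn : n ≠ 0 := by
      intro h
      subst h
      apply ha0
      have hca : a = C (constantCoeff a) := (eq_C_of_isEmpty a)
      have : constantCoeff a = 0 := by
        rw [constantCoeff_eq]
        exact ha.coeff_eq_zero (by simp [map_zero])
      rw [hca, this, map_zero]
    obtain ⟨m, rfl⟩ : ∃ m, n = m + 1 := ⟨n - 1, by omega⟩
    obtain ⟨Φ, Ψ, hΦΨ, hΨΦ, hΦX0, hΦh, hΨh⟩ := CaseRk1Aux.exists_autom a ha ha0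
    have hΨa : Ψ a = X 0 := by rw [← hΦX0, hΨΦ]
    set P' := Ψ P with hP'def
    set T' : ι → MvPolynomial (Fin (m + 1)) ℂ := fun i => Ψ (T i) with hT'def
    have hP' : Irreducible P' := by
      have := CaseRk1Aux.irreducible_transport Ψ.toRingHom Φ.toRingHom hΨΦ hΦΨ hP
      exact this
    have hP'2 : P'.IsHomogeneous 2 := hΨh P 2 hP2
    have hprod' : (∏ i ∈ s, T' i) ∈ (Ideal.span {P', X 0}).radical := by
      obtain ⟨k, hk⟩ := hprod
      refine ⟨k, ?_⟩
      have h2 : (Ψ (∏ i ∈ s, T i)) ^ k ∈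
          Ideal.span ({P', Ψ a * Ψ b} : Set (MvPolynomial (Fin (m + 1)) ℂ)) := by
        rw [← map_pow]
        rw [Ideal.mem_span_pair] at hk ⊢
        obtain ⟨u, v, huv⟩ := hk
        refine ⟨Ψ u, Ψ v, ?_⟩
        rw [hP'def]
        simp only [← map_mul, ← map_add]
        rw [huv]
      have hle : Ideal.span ({P', Ψ a * Ψ b} : Set (MvPolynomial (Fin (m + 1)) ℂ)) ≤
          Ideal.span {P', X 0} := by
        rw [Ideal.span_le]
        rintro x hx
        rcases hx with rfl | hx
        · exact Ideal.subset_span (by left; rfl)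
        · rcases hx with rfl
          rw [hΨa]
          exact Ideal.mul_mem_right _ _ (Ideal.subset_span (by right; rfl))
      rw [map_prod] at h2
      exact hle h2
    have hT' : ∀ i ∈ s, (T' i).IsHomogeneous 2 := fun i hi => hΨh _ 2 (hT i hi)
    rcases key_dichotomy P' hP' hP'2 s T' hT' hprod' with
      ⟨l, m', c, hl, hm', hc, hPeq⟩ | ⟨i, hi, α, c, hc, hTeq⟩
    · left
      have heq : P = Φ l * Φ m' + a * Φ c := by
        calc P = Φ P' := (hΦΨ P).symm
          _ = Φ l * Φ m' + Φ (X 0) * Φ c := by rw [hPeq, map_add, map_mul, map_mul]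
          _ = Φ l * Φ m' + a * Φ c := by rw [hΦX0]
      exact rank_two_of_rep hP (hΦh l 1 hl) (hΦh m' 1 hm') ha (hΦh c 1 hc) heq
    · right
      refine ⟨i, hi, α, Φ c, hΦh c 1 hc, ?_⟩
      calc T i = Φ (T' i) := (hΦΨ (T i)).symm
        _ = Φ (α • P' + X 0 * c) := by rw [hTeq]
        _ = α • P + a * Φ c := by rw [map_add, map_smul, map_mul, hΦX0, hΦΨ P]
end
end

section
/- Let z, a, b be linear forms in ℂ[x₁,...,xₙ] with a ∉ span{z} and b ∉ span{a, z}. Let ε_a, δ_a, ε_b, δ_b ∈ ℂ be such that ε_a·a + δ_a·z ≠ 0 and ε_b·b + δ_b·z ≠ 0, let λ, β ∈ ℂ \ {0}, and let c, d be linear forms such that λ·a·(ε_a·a + δ_a·z) + β·b·(ε_b·b + δ_b·z) + c·d ∈ span{z²}. Then there exist μ, η ∈ ℂ \ {0} and ε ∈ ℂ such that c = μ·a + η·b + ε·z or d = μ·a + η·b + ε·z. -/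
open MvPolynomial

noncomputable section

variable {n : ℕ}

lemma degree_one_classify {n : ℕ} (m : Fin n →₀ ℕ) (hm : m.degree = 1) :
    ∃ i, m = Finsupp.single i 1 := by
  have hne : m ≠ 0 := by
    intro h; rw [h, map_zero] at hm; exact one_ne_zero hm.symm
  obtain ⟨i, hi⟩ := Finsupp.support_nonempty_iff.2 hne
  refine ⟨i, ?_⟩
  have h1 : m i ≤ 1 := by
    rw [← hm]; exact Finset.single_le_sum (fun j _ => Nat.zero_le _) hi
  have h2 : 1 ≤ m i := Nat.one_le_iff_ne_zero.2 (Finsupp.mem_support_iff.1 hi)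
  have hmi : m i = 1 := le_antisymm h1 h2
  ext j
  rcases eq_or_ne j i with rfl | hj
  · simp [hmi]
  · simp [Finsupp.single_apply, (Ne.symm hj : ¬ i = j)]
    by_contra hj0
    have hjs : j ∈ m.support := Finsupp.mem_support_iff.2 hj0
    have hsub : ({i, j} : Finset (Fin n)) ⊆ m.support := by
      intro k hk; simp at hk; rcases hk with rfl | rfl <;> assumption
    have h3 : m i + m j ≤ m.degree := by
      have := Finset.sum_le_sum_of_subset (f := fun k => m k) hsub
      rwa [Finset.sum_pair hj.symm] at this
    omega

lemma rep (l : MvPolynomial (Fin n) ℂ) (hl : IsLinearForm l) :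
    l = ∑ i : Fin n, MvPolynomial.C (coeff (Finsupp.single i 1) l) * X i := by
  ext m
  rw [coeff_sum]
  simp only [coeff_C_mul, coeff_X']
  by_cases hm : m.degree = 1
  · obtain ⟨j, rfl⟩ := degree_one_classify m hm
    rw [Finset.sum_eq_single j]
    · simp
    · intro i _ hij
      have : ¬ (Finsupp.single i 1 = Finsupp.single j 1) := by
        simp [Finsupp.single_eq_single_iff, hij]
      simp [this]
    · simp
  · rw [hl.coeff_eq_zero hm]
    symm
    apply Finset.sum_eq_zero
    intro i _
    have : ¬ (Finsupp.single i 1 = m) := by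
      intro h; apply hm; rw [← h]
      simp [Finsupp.degree_single]
    simp [this]

noncomputable def fL (l : MvPolynomial (Fin n) ℂ) : ((Fin n) → ℂ) →ₗ[ℂ] ℂ :=
  ∑ i : Fin n, coeff (Finsupp.single i 1) l • LinearMap.proj i

lemma fL_apply (l : MvPolynomial (Fin n) ℂ) (p : Fin n → ℂ) :
    fL l p = ∑ i : Fin n, coeff (Finsupp.single i 1) l * p i := by
  simp [fL]

lemma eval_eq_fL (l : MvPolynomial (Fin n) ℂ) (hl : IsLinearForm l) (p : Fin n → ℂ) :
    eval p l = fL l p := by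
  conv_lhs => rw [rep l hl]
  rw [fL_apply, map_sum]
  simp

lemma fL_smul (s : ℂ) (l : MvPolynomial (Fin n) ℂ) : fL (s • l) = s • fL l := by
  simp [fL, smul_smul, Finset.smul_sum]

lemma fL_add (l l' : MvPolynomial (Fin n) ℂ) : fL (l + l') = fL l + fL l' := by
  simp [fL, add_smul, Finset.sum_add_distrib]

lemma fL_sub (l l' : MvPolynomial (Fin n) ℂ) : fL (l - l') = fL l - fL l' := by
  simp [fL, sub_smul, Finset.sum_sub_distrib]

lemma fL_eq_zero (l : MvPolynomial (Fin n) ℂ) (hl : IsLinearForm l) (h : fL l = 0) : l = 0 := by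
  rw [rep l hl]
  apply Finset.sum_eq_zero
  intro i _
  have hc : coeff (Finsupp.single i 1) l = fL l (Pi.single i 1) := by
    rw [fL_apply, Finset.sum_eq_single i]
    · simp
    · intro j _ hj; simp [Pi.single_apply, hj]
    · simp
  rw [hc, h]
  simp

lemma eq_of_fL {l l' : MvPolynomial (Fin n) ℂ} (hl : IsLinearForm l) (hl' : IsLinearForm l')
    (h : fL l = fL l') : l = l' := by
  have h0 : l - l' = 0 := fL_eq_zero _ (hl.sub hl') (by rw [fL_sub, h, sub_self])
  exact sub_eq_zero.mp h0

section LA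
variable {V : Type*} [AddCommGroup V] [Module ℂ V]

lemma exists_point (g1 g2 g3 : V →ₗ[ℂ] ℂ) (h : ∀ α γ : ℂ, α • g1 + γ • g2 ≠ g3) :
    ∃ p : V, g1 p = 0 ∧ g2 p = 0 ∧ g3 p = 1 := by
  have hno : ¬ (∀ p : V, g1 p = 0 → g2 p = 0 → g3 p = 0) := by
    intro hker
    have hle : ⨅ i : Fin 2, LinearMap.ker (![g1, g2] i) ≤ LinearMap.ker g3 := by
      intro x hx
      rw [Submodule.mem_iInf] at hx
      have h1 := hx 0; have h2 := hx 1
      simp only [LinearMap.mem_ker, Matrix.cons_val_zero, Matrix.cons_val_one,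
        Matrix.head_cons] at h1 h2 ⊢
      exact hker x h1 h2
    have hsp := mem_span_of_iInf_ker_le_ker hle
    rw [Submodule.mem_span_range_iff_exists_fun] at hsp
    obtain ⟨f, hf⟩ := hsp
    apply h (f 0) (f 1)
    simpa [Fin.sum_univ_two] using hf
  push_neg at hno
  obtain ⟨p, h1, h2, h3⟩ := hno
  exact ⟨(g3 p)⁻¹ • p, by simp [h1], by simp [h2], by simp [inv_mul_cancel₀ h3]⟩

lemma span_coeffs (g1 g2 g3 K : V →ₗ[ℂ] ℂ)
    (h : ∀ p : V, g1 p = 0 → g2 p = 0 → g3 p = 0 → K p = 0) :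
    ∃ x y w : ℂ, K = x • g1 + y • g2 + w • g3 := by
  have hle : ⨅ i : Fin 3, LinearMap.ker (![g1, g2, g3] i) ≤ LinearMap.ker K := by
    intro v hv
    rw [Submodule.mem_iInf] at hv
    have h1 := hv 0; have h2 := hv 1; have h3 := hv 2
    simp only [LinearMap.mem_ker, Matrix.cons_val_zero, Matrix.cons_val_one,
      Matrix.head_cons, Matrix.cons_val_two, Matrix.tail_cons] at h1 h2 h3 ⊢
    exact h v h1 h2 h3
  have hsp := mem_span_of_iInf_ker_le_ker hle
  rw [Submodule.mem_span_range_iff_exists_fun] at hsp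
  obtain ⟨f, hf⟩ := hsp
  exact ⟨f 0, f 1, f 2, by rw [← hf]; simp [Fin.sum_univ_three]⟩

end LA

lemma IsLinearForm.smulc {l : MvPolynomial (Fin n) ℂ} (hl : IsLinearForm l) (s : ℂ) :
    IsLinearForm (s • l) := by
  rw [smul_eq_C_mul]; exact hl.C_mul s

set_option maxHeartbeats 1600000 in
/-- Claim `c,d,V`: if `z, a, b` are linear forms with `a ∉ span{z}`,
`b ∉ span{a,z}`, and `λ·a·(εₐa + δₐz) + β·b·(ε_b b + δ_b z) + c·d ∈ span{z²}` with
`λ, β ≠ 0`, then `c` or `d` equals `μa + ηb + εz` with `μ, η ≠ 0`. -/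
theorem cd_in_span (n : ℕ) (z a b : MvPolynomial (Fin n) ℂ)
    (hz : IsLinearForm z) (ha : IsLinearForm a) (hb : IsLinearForm b)
    (haz : a ∉ Submodule.span ℂ ({z} : Set (MvPolynomial (Fin n) ℂ)))
    (hbaz : b ∉ Submodule.span ℂ ({a, z} : Set (MvPolynomial (Fin n) ℂ)))
    (εa δa εb δb : ℂ)
    (hA : εa • a + δa • z ≠ 0) (hB : εb • b + δb • z ≠ 0)
    (lam β : ℂ) (hlam : lam ≠ 0) (hβ : β ≠ 0)
    (c d : MvPolynomial (Fin n) ℂ) (hc : IsLinearForm c) (hd : IsLinearForm d)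
    (hmem : lam • (a * (εa • a + δa • z)) + β • (b * (εb • b + δb • z)) + c * d
      ∈ Submodule.span ℂ ({z ^ 2} : Set (MvPolynomial (Fin n) ℂ))) :
    ∃ μ η ε : ℂ, μ ≠ 0 ∧ η ≠ 0 ∧
      (c = μ • a + η • b + ε • z ∨ d = μ • a + η • b + ε • z) := by
  obtain ⟨t, ht⟩ := Submodule.mem_span_singleton.1 hmem
  -- the key pointwise identity
  have key : ∀ p : Fin n → ℂ, fL c p * fL d p
      = t * (fL z p)^2 - lam * (fL a p * (εa * fL a p + δa * fL z p))
        - β * (fL b p * (εb * fL b p + δb * fL z p)) := by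
    intro p
    have h := congrArg (eval p) ht
    simp only [smul_eval, map_add, map_mul, map_pow] at h
    rw [eval_eq_fL z hz p, eval_eq_fL a ha p, eval_eq_fL b hb p, eval_eq_fL c hc p,
      eval_eq_fL d hd p] at h
    linear_combination -h
  -- non-membership at the functional level
  have hfa_ne : ∀ α γ : ℂ, α • fL z + γ • fL b ≠ fL a := by
    intro α γ h
    have heq : α • z + γ • b = a := by
      apply eq_of_fL ((hz.smulc α).add (hb.smulc γ)) ha
      rw [fL_add, fL_smul, fL_smul, h]
    rcases eq_or_ne γ 0 with rfl | hγ
    · exact haz (Submodule.mem_span_singleton.2 ⟨α, by simpa using heq⟩)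
    · refine hbaz (Submodule.mem_span_pair.2 ⟨γ⁻¹, -(γ⁻¹ * α), ?_⟩)
      rw [← heq]; match_scalars <;> field_simp <;> ring
  have hfb_ne : ∀ α γ : ℂ, α • fL z + γ • fL a ≠ fL b := by
    intro α γ h
    have heq : α • z + γ • a = b := by
      apply eq_of_fL ((hz.smulc α).add (ha.smulc γ)) hb
      rw [fL_add, fL_smul, fL_smul, h]
    exact hbaz (Submodule.mem_span_pair.2 ⟨γ, α, by rw [← heq]; ring⟩)
  have hfz_ne : z ≠ 0 → ∀ α γ : ℂ, α • fL a + γ • fL b ≠ fL z := by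
    intro hz0 α γ h
    have heq : α • a + γ • b = z := by
      apply eq_of_fL ((ha.smulc α).add (hb.smulc γ)) hz
      rw [fL_add, fL_smul, fL_smul, h]
    rcases eq_or_ne γ 0 with rfl | hγ
    · rcases eq_or_ne α 0 with rfl | hα
      · apply hz0; rw [← heq]; simp
      · refine haz (Submodule.mem_span_singleton.2 ⟨α⁻¹, ?_⟩)
        rw [← heq]; match_scalars <;> field_simp <;> ring
    · refine hbaz (Submodule.mem_span_pair.2 ⟨-(γ⁻¹ * α), γ⁻¹, ?_⟩)
      rw [← heq]; match_scalars <;> field_simp <;> ring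
  obtain ⟨p2, hp2z, hp2b, hp2a⟩ := exists_point (fL z) (fL b) (fL a) hfa_ne
  obtain ⟨p3, hp3z, hp3a, hp3b⟩ := exists_point (fL z) (fL a) (fL b) hfb_ne
  -- joint kernel of z,a,b is inside kernels of c and d
  have hprod : ¬ (∀ q : Fin n → ℂ, fL c q * fL d q = 0) := by
    intro hall
    have h0 : ∀ q : Fin n → ℂ, (0:ℂ) = t * (fL z q)^2
        - lam * (fL a q * (εa * fL a q + δa * fL z q))
        - β * (fL b q * (εb * fL b q + δb * fL z q)) := by
      intro q; exact (hall q).symm.trans (key q)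
    have hεa : εa = 0 := by
      have h := h0 p2; rw [hp2z, hp2a, hp2b] at h
      have h' : lam * εa = 0 := by linear_combination h
      exact (mul_eq_zero.1 h').resolve_left hlam
    have hεb : εb = 0 := by
      have h := h0 p3; rw [hp3z, hp3a, hp3b] at h
      have h' : β * εb = 0 := by linear_combination h
      exact (mul_eq_zero.1 h').resolve_left hβ
    have hδa : δa ≠ 0 := by
      intro h; apply hA; rw [hεa, h]; simp
    have hz0 : z ≠ 0 := by
      intro h; apply hA; rw [hεa, h]; simp
    obtain ⟨p1, hp1a, hp1b, hp1z⟩ := exists_point (fL a) (fL b) (fL z) (hfz_ne hz0)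
    have ht0 : t = 0 := by
      have := h0 p1; rw [hp1z, hp1a, hp1b] at this; linear_combination -this
    have := h0 (p1 + p2)
    simp only [map_add] at this
    rw [hp1z, hp1a, hp1b, hp2z, hp2a, hp2b, hεa, ht0] at this
    apply hδa
    have hld : lam * δa = 0 := by linear_combination this
    rcases mul_eq_zero.1 hld with h | h
    · exact absurd h hlam
    · exact h
  have hker : ∀ p, fL z p = 0 → fL a p = 0 → fL b p = 0 → fL c p = 0 ∧ fL d p = 0 := by
    intro p h1 h2 h3
    have hcd : fL c p * fL d p = 0 := by
      have := key p; rw [h1, h2, h3] at this; linear_combination this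
    have hsum : ∀ q, fL c p * fL d q + fL c q * fL d p = 0 := by
      intro q
      have hq := key q
      have hqp := key (q + p)
      simp only [map_add] at hqp
      rw [h1, h2, h3] at hqp
      linear_combination hqp - hq - hcd
    constructor
    · by_contra hcp
      have hdp : fL d p = 0 := (mul_eq_zero.1 hcd).resolve_left hcp
      apply hprod; intro q
      have hs := hsum q
      rw [hdp, mul_zero, add_zero] at hs
      have : fL d q = 0 := (mul_eq_zero.1 hs).resolve_left hcp
      rw [this, mul_zero]
    · by_contra hdp
      have hcp : fL c p = 0 := (mul_eq_zero.1 hcd).resolve_right hdp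
      apply hprod; intro q
      have hs := hsum q
      rw [hcp, zero_mul, zero_add] at hs
      have : fL c q = 0 := (mul_eq_zero.1 hs).resolve_right hdp
      rw [this, zero_mul]
  obtain ⟨cu, cv, cw, hcrep⟩ := span_coeffs (fL z) (fL a) (fL b) (fL c)
    (fun p h1 h2 h3 => (hker p h1 h2 h3).1)
  obtain ⟨du, dv, dw, hdrep⟩ := span_coeffs (fL z) (fL a) (fL b) (fL d)
    (fun p h1 h2 h3 => (hker p h1 h2 h3).2)
  have Cq : ∀ q, fL c q = cu * fL z q + cv * fL a q + cw * fL b q := by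
    intro q; rw [hcrep]; simp
  have Dq : ∀ q, fL d q = du * fL z q + dv * fL a q + dw * fL b q := by
    intro q; rw [hdrep]; simp
  have r1 : cv * dv = -(lam * εa) := by
    have h := key p2; rw [Cq p2, Dq p2, hp2z, hp2a, hp2b] at h; linear_combination h
  have r2 : cw * dw = -(β * εb) := by
    have h := key p3; rw [Cq p3, Dq p3, hp3z, hp3a, hp3b] at h; linear_combination h
  have r3 : cv * dw + cw * dv = 0 := by
    have h := key (p2 + p3)
    rw [Cq (p2 + p3), Dq (p2 + p3)] at h
    simp only [map_add] at h
    rw [hp2z, hp2a, hp2b, hp3z, hp3a, hp3b] at h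
    linear_combination h - r1 - r2
  have hcpoly : c = cv • a + cw • b + cu • z := by
    apply eq_of_fL hc (((ha.smulc cv).add (hb.smulc cw)).add (hz.smulc cu))
    rw [fL_add, fL_add, fL_smul, fL_smul, fL_smul, hcrep]
    module
  have hdpoly : d = dv • a + dw • b + du • z := by
    apply eq_of_fL hd (((ha.smulc dv).add (hb.smulc dw)).add (hz.smulc du))
    rw [fL_add, fL_add, fL_smul, fL_smul, fL_smul, hdrep]
    module
  by_cases hz0 : z = 0
  · have hεa : εa ≠ 0 := fun h => hA (by rw [h, hz0]; simp)
    have hεb : εb ≠ 0 := fun h => hB (by rw [h, hz0]; simp)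
    have hcv : cv ≠ 0 := by
      intro h; rw [h, zero_mul] at r1
      exact hεa ((mul_eq_zero.1 (by linear_combination r1 : lam * εa = 0)).resolve_left hlam)
    have hcw : cw ≠ 0 := by
      intro h; rw [h, zero_mul] at r2
      exact hεb ((mul_eq_zero.1 (by linear_combination r2 : β * εb = 0)).resolve_left hβ)
    exact ⟨cv, cw, cu, hcv, hcw, Or.inl hcpoly⟩
  · obtain ⟨p1, hp1a, hp1b, hp1z⟩ := exists_point (fL a) (fL b) (fL z) (hfz_ne hz0)
    have r4 : cu * du = t := by
      have h := key p1; rw [Cq p1, Dq p1, hp1z, hp1a, hp1b] at h; linear_combination h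
    have r5 : cu * dv + cv * du = -(lam * δa) := by
      have h := key (p1 + p2)
      rw [Cq (p1 + p2), Dq (p1 + p2)] at h
      simp only [map_add] at h
      rw [hp1z, hp1a, hp1b, hp2z, hp2a, hp2b] at h
      linear_combination h - r1 - r4
    have r6 : cu * dw + cw * du = -(β * δb) := by
      have h := key (p1 + p3)
      rw [Cq (p1 + p3), Dq (p1 + p3)] at h
      simp only [map_add] at h
      rw [hp1z, hp1a, hp1b, hp3z, hp3a, hp3b] at h
      linear_combination h - r2 - r4
    by_cases hcv : cv = 0
    · have hεa : εa = 0 := by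
        rw [hcv, zero_mul] at r1
        exact (mul_eq_zero.1 (by linear_combination r1 : lam * εa = 0)).resolve_left hlam
      have hδa : δa ≠ 0 := fun h => hA (by rw [hεa, h]; simp)
      have hdv : dv ≠ 0 := by
        intro h; rw [hcv, h, mul_zero, zero_mul, add_zero] at r5
        exact hδa ((mul_eq_zero.1 (by linear_combination r5 : lam * δa = 0)).resolve_left hlam)
      have hcw : cw = 0 := by
        rw [hcv, zero_mul, zero_add] at r3
        exact (mul_eq_zero.1 r3).resolve_right hdv
      have hεb : εb = 0 := by
        rw [hcw, zero_mul] at r2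
        exact (mul_eq_zero.1 (by linear_combination r2 : β * εb = 0)).resolve_left hβ
      have hδb : δb ≠ 0 := fun h => hB (by rw [hεb, h]; simp)
      have hdw : dw ≠ 0 := by
        intro h; rw [hcw, h, mul_zero, zero_mul, add_zero] at r6
        exact hδb ((mul_eq_zero.1 (by linear_combination r6 : β * δb = 0)).resolve_left hβ)
      exact ⟨dv, dw, du, hdv, hdw, Or.inr hdpoly⟩
    · by_cases hcw : cw = 0
      · exfalso
        have hεb : εb = 0 := by
          rw [hcw, zero_mul] at r2
          exact (mul_eq_zero.1 (by linear_combination r2 : β * εb = 0)).resolve_left hβ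
        have hδb : δb ≠ 0 := fun h => hB (by rw [hεb, h]; simp)
        have hdw : dw ≠ 0 := by
          intro h; rw [hcw, h, mul_zero, zero_mul, add_zero] at r6
          exact hδb ((mul_eq_zero.1 (by linear_combination r6 : β * δb = 0)).resolve_left hβ)
        rw [hcw, zero_mul, add_zero] at r3
        exact hcv ((mul_eq_zero.1 r3).resolve_right hdw)
      · exact ⟨cv, cw, cu, hcv, hcw, Or.inl hcpoly⟩
end
end

section
/- Let Q₀ be an irreducible homogeneous quadratic polynomial in ℂ[x₁,...,xₙ], let a, b be linear forms such that the polynomial C := Q₀ + a·b satisfies rank_s(C) = 2, and let L be a homogeneous quadratic polynomial with rank_s(L) = 2. If there exist linear forms c, d such that C ∈ ⟨c, d⟩ and L ∈ ⟨c, d⟩, then either both a, b ∈ MS(Q₀) + MS(L), or Q₀ ∈ ⟨c, d⟩. -/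
open MvPolynomial

noncomputable section

namespace StmtAux

variable {n : ℕ}

lemma finsupp_degree_single_one (i : Fin n) : (Finsupp.single i 1 : Fin n →₀ ℕ).degree = 1 := by
  exact Finsupp.degree_single i 1

lemma finsupp_degree_add (a b : Fin n →₀ ℕ) : (a + b).degree = a.degree + b.degree := by
  simp [Finsupp.degree_eq_weight_one, map_add]

lemma exists_single_add (m : Fin n →₀ ℕ) (k : ℕ) (h : m.degree = k + 1) :
    ∃ (i : Fin n) (m' : Fin n →₀ ℕ), m = Finsupp.single i 1 + m' ∧ m'.degree = k := by
  have hne : m ≠ 0 := by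
    intro h0; rw [h0, map_zero] at h; omega
  obtain ⟨i, hi⟩ := Finsupp.support_nonempty_iff.mpr hne
  have hmi : 1 ≤ m i := Nat.one_le_iff_ne_zero.mpr (Finsupp.mem_support_iff.mp hi)
  have heq : m = Finsupp.single i 1 + (m - Finsupp.single i 1) := by
    ext j
    have hsub : ((m - Finsupp.single i 1 : Fin n →₀ ℕ)) j = m j - (Finsupp.single i 1) j :=
      Finsupp.tsub_apply _ _ j
    rcases eq_or_ne i j with rfl | hj
    · simp only [Finsupp.add_apply, hsub, Finsupp.single_eq_same]
      omega
    · simp only [Finsupp.add_apply, hsub, Finsupp.single_eq_of_ne' hj]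
      omega
  refine ⟨i, m - Finsupp.single i 1, heq, ?_⟩
  have h2 := finsupp_degree_add (Finsupp.single i 1) (m - Finsupp.single i 1)
  rw [← heq, finsupp_degree_single_one] at h2
  omega

lemma degree_one_single (m : Fin n →₀ ℕ) (h : m.degree = 1) :
    ∃ i : Fin n, m = Finsupp.single i 1 := by
  obtain ⟨i, m', hm, hd⟩ := exists_single_add m 0 h
  rw [Finsupp.degree_eq_zero_iff] at hd
  exact ⟨i, by rw [hm, hd, add_zero]⟩

lemma degree_two_single (m : Fin n →₀ ℕ) (h : m.degree = 2) :
    ∃ i j : Fin n, m = Finsupp.single i 1 + Finsupp.single j 1 := by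
  obtain ⟨i, m', hm, hd⟩ := exists_single_add m 1 h
  obtain ⟨j, hj⟩ := degree_one_single m' hd
  exact ⟨i, j, by rw [hm, hj]⟩

lemma isHomogeneous_degree (Q : MvPolynomial (Fin n) ℂ) {k : ℕ} (hQ : Q.IsHomogeneous k)
    {m : Fin n →₀ ℕ} (hm : coeff m Q ≠ 0) : m.degree = k := by
  have := hQ hm
  rwa [Finsupp.degree_eq_weight_one]

/-- A linear form is a combination of the variables. -/
lemma linear_eq_sum (l : MvPolynomial (Fin n) ℂ) (hl : IsLinearForm l) :
    l = ∑ i : Fin n, C (coeff (Finsupp.single i 1) l) * X i := by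
  classical
  apply MvPolynomial.ext
  intro m
  rw [coeff_sum]
  simp only [coeff_C_mul, coeff_X']
  by_cases hm : ∃ i : Fin n, Finsupp.single i 1 = m
  · obtain ⟨i, rfl⟩ := hm
    rw [Finset.sum_eq_single i]
    · simp
    · intro j _ hj
      rw [if_neg, mul_zero]
      intro hh
      exact hj (by
        rcases (Finsupp.single_eq_single_iff _ _ _ _).mp hh with ⟨h1, _⟩ | ⟨h1, _⟩
        · exact h1
        · exact absurd h1 one_ne_zero)
    · simp
  · push_neg at hm
    have h0 : coeff m l = 0 := by
      by_contra hne
      obtain ⟨i, hi⟩ := degree_one_single m (isHomogeneous_degree l hl hne)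
      exact hm i hi.symm
    rw [h0]
    rw [Finset.sum_eq_zero]
    intro j _
    rw [if_neg (hm j), mul_zero]

lemma monomial_two_eq (i j : Fin n) (c : ℂ) :
    monomial (Finsupp.single i 1 + Finsupp.single j 1) c = (C c * X i) * X j := by
  have hX : ∀ t : Fin n, (X t : MvPolynomial (Fin n) ℂ) = monomial (Finsupp.single t 1) 1 :=
    fun t => rfl
  rw [C_apply, hX, hX, monomial_mul, monomial_mul]
  simp

/-- Gluing two representations. -/
lemma isRep_add {Q Q' : MvPolynomial (Fin n) ℂ} {r s : ℕ}
    {f g : ℕ → MvPolynomial (Fin n) ℂ} (hf : IsRep Q r f) (hg : IsRep Q' s g) :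
    IsRep (Q + Q') (r + s) (fun k => if k < 2 * r then f k else g (k - 2 * r)) := by
  constructor
  · intro i hi
    by_cases h : i < 2 * r
    · simpa [h] using hf.1 i h
    · simpa [h] using hg.1 (i - 2 * r) (by omega)
  · rw [hf.2, hg.2, Finset.sum_range_add]
    congr 1
    · refine Finset.sum_congr rfl fun k hk => ?_
      have hk' := Finset.mem_range.mp hk
      have h1 : 2 * k < 2 * r := by omega
      have h2 : 2 * k + 1 < 2 * r := by omega
      simp [h1, h2]
    · refine Finset.sum_congr rfl fun k hk => ?_
      have h1 : ¬ (2 * (r + k) < 2 * r) := by omega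
      have h2 : ¬ (2 * (r + k) + 1 < 2 * r) := by omega
      have e1 : 2 * (r + k) - 2 * r = 2 * k := by omega
      have e2 : 2 * (r + k) + 1 - 2 * r = 2 * k + 1 := by omega
      simp [h1, h2, e1, e2]

lemma isRep_monomial (m : Fin n →₀ ℕ) (hdeg : m.degree = 2) (c : ℂ) :
    ∃ f, IsRep (monomial m c) 1 f := by
  obtain ⟨i, j, rfl⟩ := degree_two_single m hdeg
  refine ⟨fun k => if k = 0 then C c * X i else X j, ?_, ?_⟩
  · intro t ht
    rcases (by omega : t = 0 ∨ t = 1) with rfl | rfl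
    · simpa [IsLinearForm] using (isHomogeneous_X ℂ i).C_mul c
    · simpa [IsLinearForm] using isHomogeneous_X ℂ j
  · rw [Finset.sum_range_one]
    simpa using monomial_two_eq i j c

lemma exists_rep_sum (s : Finset (Fin n →₀ ℕ)) (co : (Fin n →₀ ℕ) → ℂ)
    (h : ∀ m ∈ s, Finsupp.degree m = 2) :
    ∃ r f, IsRep (∑ m ∈ s, monomial m (co m)) r f := by
  classical
  induction s using Finset.induction_on with
  | empty =>
      refine ⟨0, fun _ => 0, fun i hi => by omega, ?_⟩
      simp
  | @insert a s' hm ih =>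
      obtain ⟨r, f, hf⟩ := ih fun m hm' => h m (Finset.mem_insert_of_mem hm')
      obtain ⟨g, hg⟩ := isRep_monomial a (h a (Finset.mem_insert_self a s')) (co a)
      rw [Finset.sum_insert hm]
      exact ⟨1 + r, _, isRep_add hg hf⟩

lemma exists_rep (Q : MvPolynomial (Fin n) ℂ) (hQ : Q.IsHomogeneous 2) :
    ∃ r f, IsRep Q r f := by
  obtain ⟨r, f, hf⟩ := exists_rep_sum Q.support (fun m => coeff m Q)
    (fun m hm => isHomogeneous_degree Q hQ (mem_support_iff.mp hm))
  rw [← as_sum Q] at hf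
  exact ⟨r, f, hf⟩

/-- Extracting a representation `P = c*u + d*v` with `u, v` linear. -/
lemma hc2_mul_linear (c f : MvPolynomial (Fin n) ℂ) (hc : IsLinearForm c) :
    homogeneousComponent 2 (c * f) = c * homogeneousComponent 1 f := by
  conv_lhs => rw [← sum_homogeneousComponent f]
  rw [Finset.mul_sum, map_sum]
  have hterm : ∀ i ∈ Finset.range (f.totalDegree + 1),
      homogeneousComponent 2 (c * homogeneousComponent i f) =
        if i = 1 then c * homogeneousComponent 1 f else 0 := by
    intro i _
    have h3 : c * homogeneousComponent i f ∈ homogeneousSubmodule (Fin n) ℂ (1 + i) :=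
      (mem_homogeneousSubmodule _ _).mpr (hc.mul (homogeneousComponent_isHomogeneous i f))
    rw [homogeneousComponent_of_mem h3]
    rcases eq_or_ne i 1 with rfl | hi
    · simp
    · rw [if_neg (by omega), if_neg hi]
  rw [Finset.sum_congr rfl hterm, Finset.sum_ite_eq' _ 1
    (fun _ => c * homogeneousComponent 1 f)]
  by_cases h1 : 1 ∈ Finset.range (f.totalDegree + 1)
  · rw [if_pos h1]
  · rw [if_neg h1]
    have : f.totalDegree = 0 := by
      have h2 : ¬ 1 < f.totalDegree + 1 := fun h => h1 (Finset.mem_range.mpr h)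
      omega
    rw [homogeneousComponent_eq_zero _ f (by omega), mul_zero]

lemma extract (P c d : MvPolynomial (Fin n) ℂ) (hP : P.IsHomogeneous 2)
    (hc : IsLinearForm c) (hd : IsLinearForm d)
    (h : P ∈ Ideal.span ({c, d} : Set (MvPolynomial (Fin n) ℂ))) :
    ∃ u v, IsLinearForm u ∧ IsLinearForm v ∧ P = c * u + d * v := by
  obtain ⟨f, g, hfg⟩ := Ideal.mem_span_pair.mp h
  refine ⟨homogeneousComponent 1 f, homogeneousComponent 1 g,
    homogeneousComponent_isHomogeneous 1 f, homogeneousComponent_isHomogeneous 1 g, ?_⟩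
  have h2 := congrArg (homogeneousComponent 2) hfg
  rw [map_add, mul_comm f c, mul_comm g d, hc2_mul_linear c f hc, hc2_mul_linear d g hd,
    homogeneousComponent_of_mem ((mem_homogeneousSubmodule _ _).mpr hP)] at h2
  rw [if_pos rfl] at h2
  exact h2.symm

/-- The derivation in direction `p`. -/
def Dp (p : Fin n → ℂ) : Derivation ℂ (MvPolynomial (Fin n) ℂ) (MvPolynomial (Fin n) ℂ) :=
  mkDerivation ℂ (fun i => (C (p i) : MvPolynomial (Fin n) ℂ))

lemma Dp_mul (p : Fin n → ℂ) (x y : MvPolynomial (Fin n) ℂ) :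
    Dp p (x * y) = x * Dp p y + y * Dp p x := by
  rw [Derivation.leibniz]
  simp [smul_eq_mul]

lemma Dp_linear (p : Fin n → ℂ) (l : MvPolynomial (Fin n) ℂ) (hl : IsLinearForm l) :
    Dp p l = C (eval p l) := by
  conv_lhs => rw [linear_eq_sum l hl]
  conv_rhs => rw [linear_eq_sum l hl]
  rw [map_sum, show eval p (∑ i : Fin n, C (coeff (Finsupp.single i 1) l) * X i)
      = ∑ i : Fin n, coeff (Finsupp.single i 1) l * p i by simp, map_sum]
  refine Finset.sum_congr rfl fun i _ => ?_
  have hCa : (Dp p) (C (coeff (Finsupp.single i 1) l)) = 0 := by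
    simp [Dp]
  rw [Dp_mul, hCa, mul_zero, add_zero, Dp, mkDerivation_X, ← C_mul, mul_comm]

lemma phi_linear (φ : MvPolynomial (Fin n) ℂ →ₗ[ℂ] ℂ) (l : MvPolynomial (Fin n) ℂ)
    (hl : IsLinearForm l) :
    eval (fun i => φ (X i)) l = φ l := by
  conv_lhs => rw [linear_eq_sum l hl]
  conv_rhs => rw [linear_eq_sum l hl]
  rw [map_sum, map_sum]
  refine Finset.sum_congr rfl fun i _ => ?_
  rw [map_mul, eval_C, eval_X, ← smul_eq_C_mul, map_smul, smul_eq_mul]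

/-- Key step: if the direction `p` kills a representation of `Q` as well as `c, d`, and
`eval p a = 1`, then from `Q + a*b = c*u + d*v` we get `Q ∈ ⟨c, d⟩`. -/
lemma key (p : Fin n → ℂ) (Q a b c d u v : MvPolynomial (Fin n) ℂ)
    (ha : IsLinearForm a) (hb : IsLinearForm b) (hc : IsLinearForm c) (hd : IsLinearForm d)
    (hu : IsLinearForm u) (hv : IsLinearForm v)
    (r : ℕ) (m : ℕ → MvPolynomial (Fin n) ℂ) (hm : IsRep Q r m)
    (hE : Q + a * b = c * u + d * v)
    (h0 : ∀ k < 2 * r, eval p (m k) = 0)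
    (hc0 : eval p c = 0) (hd0 : eval p d = 0) (ha1 : eval p a = 1) :
    Q ∈ Ideal.span ({c, d} : Set (MvPolynomial (Fin n) ℂ)) := by
  have hDQ : Dp p Q = 0 := by
    rw [hm.2, map_sum]
    refine Finset.sum_eq_zero fun k hk => ?_
    have hk' := Finset.mem_range.mp hk
    rw [Dp_mul, Dp_linear p _ (hm.1 (2 * k + 1) (by omega)),
      Dp_linear p _ (hm.1 (2 * k) (by omega)), h0 (2 * k) (by omega),
      h0 (2 * k + 1) (by omega)]
    simp
  have hDE := congrArg (Dp p) hE
  rw [map_add, map_add, hDQ, zero_add, Dp_mul, Dp_mul, Dp_mul, Dp_linear p a ha, Dp_linear p b hb,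
    Dp_linear p c hc, Dp_linear p d hd, Dp_linear p u hu, Dp_linear p v hv,
    ha1, hc0, hd0] at hDE
  simp only [map_one, map_zero, mul_zero, mul_one, zero_add, add_zero] at hDE
  -- hDE : a * C (eval p b) + b = c * C (eval p u) + d * C (eval p v)
  have hb0 : eval p b = 0 := by
    have h4 := congrArg (eval p) hDE
    simp only [map_add, map_mul, eval_C, ha1, hc0, hd0, one_mul, zero_mul, add_zero,
      zero_add] at h4
    linear_combination h4 / 2
  rw [hb0, map_zero, mul_zero, zero_add] at hDE
  -- hDE : b = c * C (eval p u) + d * C (eval p v)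
  rw [Ideal.mem_span_pair]
  refine ⟨u - C (eval p u) * a, v - C (eval p v) * a, ?_⟩
  rw [hDE] at hE
  linear_combination -hE

end StmtAux

open StmtAux

/-- Claim `Q_0,L,2`: let `Q₀` be an irreducible homogeneous quadratic,
`a, b` linear forms with `rank_s(Q₀ + a·b) = 2`, and `L` a homogeneous quadratic with
`rank_s(L) = 2`. If both `Q₀ + a·b` and `L` lie in an ideal `⟨c, d⟩` generated by two
linear forms, then either `a, b ∈ MS(Q₀) + MS(L)` or `Q₀ ∈ ⟨c, d⟩`. -/
theorem Q0_ab_L_ideal (n : ℕ) (Q₀ : MvPolynomial (Fin n) ℂ)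
    (hQ₀ : Irreducible Q₀) (hQ₀2 : Q₀.IsHomogeneous 2)
    (a b : MvPolynomial (Fin n) ℂ) (ha : IsLinearForm a) (hb : IsLinearForm b)
    (hC : rankS (Q₀ + a * b) = 2)
    (L : MvPolynomial (Fin n) ℂ) (hL2 : L.IsHomogeneous 2) (hLr : rankS L = 2)
    (c d : MvPolynomial (Fin n) ℂ) (hc : IsLinearForm c) (hd : IsLinearForm d)
    (hCm : Q₀ + a * b ∈ Ideal.span ({c, d} : Set (MvPolynomial (Fin n) ℂ)))
    (hLm : L ∈ Ideal.span ({c, d} : Set (MvPolynomial (Fin n) ℂ))) :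
    (a ∈ MS Q₀ ⊔ MS L ∧ b ∈ MS Q₀ ⊔ MS L) ∨
      Q₀ ∈ Ideal.span ({c, d} : Set (MvPolynomial (Fin n) ℂ)) := by
  classical
  obtain ⟨u, v, hu, hv, hCuv⟩ :=
    extract (Q₀ + a * b) c d (hQ₀2.add (ha.mul hb)) hc hd hCm
  obtain ⟨u', v', hu', hv', hLuv⟩ := extract L c d hL2 hc hd hLm
  -- a minimal representation of Q₀
  have hne : {r | ∃ f, IsRep Q₀ r f}.Nonempty := by
    obtain ⟨r, f, hf⟩ := exists_rep Q₀ hQ₀2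
    exact ⟨r, f, hf⟩
  obtain ⟨m, hm⟩ : ∃ m, IsRep Q₀ (rankS Q₀) m := Nat.sInf_mem hne
  -- c, d belong to MS L
  set fL : ℕ → MvPolynomial (Fin n) ℂ :=
    fun k => if k = 0 then c else if k = 1 then u' else if k = 2 then d else
      if k = 3 then v' else 0 with hfL
  have hrepL : IsRep L (rankS L) fL := by
    rw [hLr]
    constructor
    · intro i hi
      rcases (by omega : i = 0 ∨ i = 1 ∨ i = 2 ∨ i = 3) with rfl | rfl | rfl | rfl
      · simpa [hfL] using hc
      · simpa [hfL] using hu'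
      · simpa [hfL] using hd
      · simpa [hfL] using hv'
    · rw [Finset.sum_range_succ, Finset.sum_range_one]
      simpa [hfL] using hLuv
  have hMSL : Submodule.span ℂ (fL '' Set.Iio (2 * rankS L)) ≤ MS L := by
    unfold MS
    exact le_iSup₂ (f := fun (g : ℕ → MvPolynomial (Fin n) ℂ) (_ : IsRep L (rankS L) g) =>
      Submodule.span ℂ (g '' Set.Iio (2 * rankS L))) fL hrepL
  have hcMS : c ∈ MS L :=
    hMSL (Submodule.subset_span ⟨0, by rw [hLr]; exact Set.mem_Iio.mpr (by norm_num),
      by simp [hfL]⟩)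
  have hdMS : d ∈ MS L :=
    hMSL (Submodule.subset_span ⟨2, by rw [hLr]; exact Set.mem_Iio.mpr (by norm_num),
      by simp [hfL]⟩)
  set U : Submodule ℂ (MvPolynomial (Fin n) ℂ) :=
    Submodule.span ℂ (m '' Set.Iio (2 * rankS Q₀)) ⊔ Submodule.span ℂ {c, d} with hU
  have hUle : U ≤ MS Q₀ ⊔ MS L := by
    rw [hU]
    apply sup_le
    · refine le_trans ?_ le_sup_left
      unfold MS
      exact le_iSup₂ (f := fun (g : ℕ → MvPolynomial (Fin n) ℂ) (_ : IsRep Q₀ (rankS Q₀) g) =>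
        Submodule.span ℂ (g '' Set.Iio (2 * rankS Q₀))) m hm
    · refine le_trans ?_ le_sup_right
      rw [Submodule.span_le]
      intro x hx
      rcases hx with rfl | hx
      · exact hcMS
      · rw [Set.mem_singleton_iff] at hx
        rw [hx]
        exact hdMS
  by_cases hab : a ∈ U ∧ b ∈ U
  · exact Or.inl ⟨hUle hab.1, hUle hab.2⟩
  · right
    have main : ∀ a' b' : MvPolynomial (Fin n) ℂ, IsLinearForm a' → IsLinearForm b' →
        Q₀ + a' * b' = c * u + d * v → a' ∉ U →
        Q₀ ∈ Ideal.span ({c, d} : Set (MvPolynomial (Fin n) ℂ)) := by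
      intro a' b' ha' hb' hE hnot
      obtain ⟨f, hf1, hf2⟩ := Submodule.exists_dual_map_eq_bot_of_notMem hnot inferInstance
      set φ : MvPolynomial (Fin n) ℂ →ₗ[ℂ] ℂ := (f a')⁻¹ • f with hφ
      have hφU : ∀ x ∈ U, φ x = 0 := by
        intro x hx
        have hx0 : f x = 0 := by
          have : f x ∈ U.map f := Submodule.mem_map_of_mem hx
          rwa [hf2, Submodule.mem_bot] at this
        simp [hφ, hx0]
      have hφa : φ a' = 1 := by
        simp only [hφ, LinearMap.smul_apply, smul_eq_mul]
        exact inv_mul_cancel₀ hf1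
      apply key (fun i => φ (X i)) Q₀ a' b' c d u v ha' hb' hc hd hu hv (rankS Q₀) m hm hE
      · intro k hk
        rw [phi_linear φ _ (hm.1 k hk)]
        exact hφU _ (le_sup_left (α := Submodule ℂ (MvPolynomial (Fin n) ℂ))
          (Submodule.subset_span ⟨k, Set.mem_Iio.mpr hk, rfl⟩))
      · rw [phi_linear φ c hc]
        exact hφU c (le_sup_right (α := Submodule ℂ (MvPolynomial (Fin n) ℂ))
          (Submodule.subset_span (by simp)))
      · rw [phi_linear φ d hd]
        exact hφU d (le_sup_right (α := Submodule ℂ (MvPolynomial (Fin n) ℂ))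
          (Submodule.subset_span (by simp)))
      · rw [phi_linear φ a' ha']
        exact hφa
    rcases not_and_or.mp hab with hna | hnb
    · exact main a b ha hb hCuv hna
    · exact main b a hb ha (by rw [mul_comm b a]; exact hCuv) hnb
end
end

section
/- Let T₁, T₂, T₃ ⊂ ℂ[x₁,...,xₙ] satisfy the EK-quadratics condition and let {i, j, k} = {1, 2, 3}. Let C ∈ T_k and let A = a² ∈ T_i be the square of a linear form a. Then at least one of the following holds: (1) there exist T ∈ T_j, α ∈ ℂ and a linear form b with T = α·C + a·b; (2) a ∈ MS(C); (3) C = b² for some linear form b and there exists T ∈ T_j with T ∈ ⟨a, b⟩. -/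
open MvPolynomial

noncomputable section

set_option maxHeartbeats 1000000

section EKAux
variable {n : ℕ}

abbrev MvP (n : ℕ) := MvPolynomial (Fin n) ℂ


lemma degree_add' (p q : Fin n →₀ ℕ) : (p + q).degree = p.degree + q.degree := by
  simp only [Finsupp.degree_eq_weight_one, map_add]

lemma EKcomp_mul_right {u v : MvP n} {dv : ℕ} (hv : v.IsHomogeneous dv) (k : ℕ) :
    homogeneousComponent (k + dv) (u * v) = homogeneousComponent k u * v := by
  ext m
  rw [coeff_homogeneousComponent, coeff_mul, coeff_mul]
  by_cases h : m.degree = k + dv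
  · rw [if_pos h]
    refine Finset.sum_congr rfl ?_
    rintro ⟨p, q⟩ hpq
    rw [Finset.HasAntidiagonal.mem_antidiagonal] at hpq
    rw [coeff_homogeneousComponent]
    by_cases hq : coeff q v = 0
    · simp [hq]
    · have hdq : q.degree = dv := by
        by_contra hne
        exact hq (hv.coeff_eq_zero hne)
      have hp : p.degree = k := by
        have := degree_add' p q
        rw [hpq, h, hdq] at this
        omega
      rw [if_pos hp]
  · rw [if_neg h]
    symm
    refine Finset.sum_eq_zero ?_
    rintro ⟨p, q⟩ hpq
    rw [Finset.HasAntidiagonal.mem_antidiagonal] at hpq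
    rw [coeff_homogeneousComponent]
    by_cases hq : coeff q v = 0
    · simp [hq]
    · have hdq : q.degree = dv := by
        by_contra hne
        exact hq (hv.coeff_eq_zero hne)
      have hp : p.degree ≠ k := by
        intro hp
        apply h
        have := degree_add' p q
        rw [hpq, hp, hdq] at this
        omega
      rw [if_neg hp, zero_mul]

lemma EKsum_comp {v : MvP n} {N : ℕ} (h : v.totalDegree < N) :
    ∑ i ∈ Finset.range N, homogeneousComponent i v = v := by
  calc ∑ i ∈ Finset.range N, homogeneousComponent i v
      = ∑ i ∈ Finset.range (v.totalDegree + 1), homogeneousComponent i v :=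
        (Finset.sum_subset (Finset.range_subset_range.2 h)
          (fun x _ hx => homogeneousComponent_eq_zero x v (by simpa using hx))).symm
    _ = v := sum_homogeneousComponent v

lemma EKcomp_mul {u v : MvP n} {du dv : ℕ} (hu : u.totalDegree ≤ du) (hv : v.totalDegree ≤ dv) :
    homogeneousComponent (du + dv) (u * v)
      = homogeneousComponent du u * homogeneousComponent dv v := by
  conv_lhs => rw [← EKsum_comp (v := v) (N := dv + 1) (by omega)]
  rw [Finset.mul_sum, map_sum]
  rw [Finset.sum_range_succ]
  have h1 : ∀ i ∈ Finset.range dv, homogeneousComponent (du + dv)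
      (u * homogeneousComponent i v) = 0 := by
    intro i hi
    rw [Finset.mem_range] at hi
    have : du + dv = (du + dv - i) + i := by omega
    rw [this, EKcomp_mul_right (homogeneousComponent_isHomogeneous i v) _]
    rw [homogeneousComponent_eq_zero _ u (by omega : u.totalDegree < du + dv - i), zero_mul]
  rw [Finset.sum_eq_zero h1, zero_add,
    EKcomp_mul_right (homogeneousComponent_isHomogeneous dv v) du]

lemma EKcomp_totalDegree_ne_zero {p : MvP n} (h0 : p ≠ 0) :
    homogeneousComponent p.totalDegree p ≠ 0 := by
  obtain ⟨m, hm, hsup⟩ := Finset.exists_mem_eq_sup p.support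
    (support_nonempty.2 h0) (fun m => m.sum fun _ e => e)
  have hdeg : m.degree = p.totalDegree := by
    rw [totalDegree, hsup]
    simp [Finsupp.degree_apply, Finsupp.sum]
  intro hc
  have := coeff_homogeneousComponent (σ := Fin n) (R := ℂ) p.totalDegree p m
  rw [hc, if_pos hdeg] at this
  exact (mem_support_iff.1 hm) this.symm

lemma EKisUnit_totalDegree {p : MvP n} (h : IsUnit p) : p.totalDegree = 0 := by
  obtain ⟨q, hq⟩ := h.exists_right_inv
  have hp0 : p ≠ 0 := by rintro rfl; simp at hq
  have hq0 : q ≠ 0 := by rintro rfl; simp at hq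
  have := EKcomp_mul (le_refl p.totalDegree) (le_refl q.totalDegree)
  rw [hq] at this
  have hne : homogeneousComponent p.totalDegree p * homogeneousComponent q.totalDegree q ≠ 0 :=
    mul_ne_zero (EKcomp_totalDegree_ne_zero hp0) (EKcomp_totalDegree_ne_zero hq0)
  rw [← this] at hne
  by_contra hd
  have h1 : (1 : MvP n).IsHomogeneous 0 := isHomogeneous_one _ _
  rw [homogeneousComponent_of_mem ((mem_homogeneousSubmodule _ _).2 h1),
    if_neg (by omega)] at hne
  exact hne rfl

lemma EKnot_isUnit {p : MvP n} {d : ℕ} (hp : p.IsHomogeneous d) (hd : d ≠ 0) (h0 : p ≠ 0) :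
    ¬ IsUnit p := fun h => hd (by rw [← hp.totalDegree h0]; exact EKisUnit_totalDegree h)

lemma EKeq_C_of_homog_zero {p : MvP n} (hp : p.IsHomogeneous 0) : p = C (coeff 0 p) := by
  have := homogeneousComponent_of_mem ((mem_homogeneousSubmodule _ _).2 hp) (m := 0)
  rw [if_pos rfl] at this
  calc p = homogeneousComponent 0 p := this.symm
    _ = C (coeff 0 p) := homogeneousComponent_zero p

lemma EKisUnit_of_td_zero {p : MvP n} (h : p.totalDegree = 0) (h0 : p ≠ 0) : IsUnit p := by
  have hh : p.IsHomogeneous 0 := (totalDegree_zero_iff_isHomogeneous _).1 h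
  rw [EKeq_C_of_homog_zero hh]
  have hc : coeff 0 p ≠ 0 := by
    intro hc
    apply h0
    rw [EKeq_C_of_homog_zero hh, hc, map_zero]
  exact (isUnit_iff_ne_zero.2 hc).map (C : ℂ →+* MvP n)

lemma EKquad_factor {C' : MvP n} (h2 : C'.IsHomogeneous 2) (h0 : C' ≠ 0)
    (hnI : ¬ Irreducible C') :
    ∃ u v : MvP n, u.IsHomogeneous 1 ∧ v.IsHomogeneous 1 ∧ C' = u * v := by
  have hnu : ¬ IsUnit C' := EKnot_isUnit h2 (by norm_num) h0
  rw [irreducible_iff] at hnI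
  push_neg at hnI
  obtain ⟨u, v, huv, hu, hv⟩ := hnI hnu
  have hu0 : u ≠ 0 := by rintro rfl; simp at huv; exact h0 huv
  have hv0 : v ≠ 0 := by rintro rfl; simp at huv; exact h0 huv
  have hcomp := EKcomp_mul (le_refl u.totalDegree) (le_refl v.totalDegree)
  rw [← huv] at hcomp
  have hne : homogeneousComponent (u.totalDegree + v.totalDegree) C' ≠ 0 := by
    rw [hcomp]
    exact mul_ne_zero (EKcomp_totalDegree_ne_zero hu0) (EKcomp_totalDegree_ne_zero hv0)
  have hsum : u.totalDegree + v.totalDegree = 2 := by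
    by_contra hc
    rw [homogeneousComponent_of_mem ((mem_homogeneousSubmodule _ _).2 h2),
      if_neg hc] at hne
    exact hne rfl
  have hu1 : u.totalDegree = 1 := by
    have h1 : u.totalDegree ≠ 0 := fun h => hu (EKisUnit_of_td_zero h hu0)
    have h2' : v.totalDegree ≠ 0 := fun h => hv (EKisUnit_of_td_zero h hv0)
    omega
  have hv1 : v.totalDegree = 1 := by omega
  refine ⟨homogeneousComponent 1 u, homogeneousComponent 1 v,
    homogeneousComponent_isHomogeneous 1 u, homogeneousComponent_isHomogeneous 1 v, ?_⟩
  have h22 := homogeneousComponent_of_mem ((mem_homogeneousSubmodule _ _).2 h2) (m := 2)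
  rw [if_pos rfl] at h22
  rw [hsum] at hcomp
  rw [hu1, hv1] at hcomp
  exact h22.symm.trans hcomp

lemma EKfactor_of_mem_span {f a : MvP n} {k : ℕ} (hf : f.IsHomogeneous (k + 1))
    (ha : a.IsHomogeneous 1) (h : f ∈ Ideal.span ({a} : Set (MvP n))) :
    ∃ e : MvP n, e.IsHomogeneous k ∧ f = a * e := by
  obtain ⟨w, hw⟩ := Ideal.mem_span_singleton'.1 h
  refine ⟨homogeneousComponent k w, homogeneousComponent_isHomogeneous k w, ?_⟩
  have h1 := homogeneousComponent_of_mem ((mem_homogeneousSubmodule _ _).2 hf) (m := k + 1)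
  rw [if_pos rfl] at h1
  calc f = homogeneousComponent (k + 1) f := h1.symm
    _ = homogeneousComponent (k + 1) (w * a) := by rw [hw]
    _ = homogeneousComponent k w * a := EKcomp_mul_right ha k
    _ = a * homogeneousComponent k w := mul_comm _ _

lemma EKdegree_one {m : Fin n →₀ ℕ} (h : m.degree = 1) : ∃ i, m = Finsupp.single i 1 := by
  have hne : m.support.Nonempty := by
    rw [Finsupp.support_nonempty_iff]
    rintro rfl
    simp at h
  obtain ⟨i, hi⟩ := hne
  have hmi : 1 ≤ m i := Nat.one_le_iff_ne_zero.2 (Finsupp.mem_support_iff.1 hi)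
  have hle : m i ≤ m.degree := by
    exact Finset.single_le_sum (f := fun j => m j) (fun _ _ => Nat.zero_le _) hi
  have hsupp : m.support = {i} := by
    apply Finset.eq_singleton_iff_unique_mem.2
    refine ⟨hi, fun j hj => ?_⟩
    by_contra hji
    have h2 : m i + m j ≤ m.degree := by
      have := Finset.sum_le_sum_of_subset (f := fun j => m j)
        (show ({i, j} : Finset (Fin n)) ⊆ m.support by
          intro x hx
          rcases Finset.mem_insert.1 hx with rfl | hx
          · exact hi
          · rwa [Finset.mem_singleton.1 hx])
      rw [Finset.sum_insert (by simpa using Ne.symm hji), Finset.sum_singleton] at this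
      exact this
    have hmj : 1 ≤ m j := Nat.one_le_iff_ne_zero.2 (Finsupp.mem_support_iff.1 hj)
    omega
  obtain ⟨-, hm⟩ := Finsupp.support_eq_singleton.1 hsupp
  refine ⟨i, ?_⟩
  rw [hm]
  congr 1
  omega

lemma EKlinear_eq_sum {p : MvP n} (hp : p.IsHomogeneous 1) :
    p = ∑ i : Fin n, C (coeff (Finsupp.single i 1) p) * X i := by
  ext m
  rw [coeff_sum]
  by_cases h : m.degree = 1
  · obtain ⟨i₀, rfl⟩ := EKdegree_one h
    rw [Finset.sum_eq_single i₀]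
    · rw [coeff_C_mul, coeff_X', if_pos rfl, mul_one]
    · intro j _ hj
      rw [coeff_C_mul, coeff_X', if_neg, mul_zero]
      intro hc
      exact hj (Finsupp.single_left_injective one_ne_zero hc)
    · intro h'
      exact absurd (Finset.mem_univ i₀) h'
  · rw [hp.coeff_eq_zero h]
    symm
    apply Finset.sum_eq_zero
    intro j _
    rw [coeff_C_mul, coeff_X', if_neg, mul_zero]
    intro hc
    apply h
    rw [← hc]
    simp [Finsupp.degree_apply, Finsupp.support_single_ne_zero _ one_ne_zero]

lemma EKexists_psi {a : MvP n} (ha : a.IsHomogeneous 1) (h0 : a ≠ 0) :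
    ∃ ψ : MvP n →ₐ[ℂ] MvP n,
      (∀ f, f - ψ f ∈ Ideal.span ({a} : Set (MvP n))) ∧ ψ a = 0 ∧
      (∀ (d : ℕ) (f : MvP n), f.IsHomogeneous d → (ψ f).IsHomogeneous d) := by
  obtain ⟨m, hm⟩ := ne_zero_iff.1 h0
  have hdm : m.degree = 1 := by
    by_contra hc
    exact hm (ha.coeff_eq_zero hc)
  obtain ⟨i₀, rfl⟩ := EKdegree_one hdm
  set α : ℂ := coeff (Finsupp.single i₀ 1) a with hα
  set g : Fin n → MvP n := fun i => X i - if i = i₀ then α⁻¹ • a else 0 with hg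
  have hglin : ∀ i, (g i).IsHomogeneous 1 := by
    intro i
    apply (isHomogeneous_X _ _).sub
    split
    · exact (homogeneousSubmodule (Fin n) ℂ 1).smul_mem _ ha
    · exact isHomogeneous_zero _ _ _
  refine ⟨aeval g, ?_, ?_, ?_⟩
  · intro f
    induction f using MvPolynomial.induction_on with
    | C c => rw [aeval_C, algebraMap_eq, sub_self]; exact Ideal.zero_mem _
    | add p q hp hq =>
        rw [map_add]
        have : p + q - (aeval g p + aeval g q) = (p - aeval g p) + (q - aeval g q) := by ring
        rw [this]
        exact Ideal.add_mem _ hp hq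
    | mul_X p i hp =>
        rw [map_mul, aeval_X]
        have h5 : p * (X i : MvP n) - aeval g p * g i
            = (p - aeval g p) * X i + aeval g p * (X i - g i) := by ring
        rw [h5]
        refine Ideal.add_mem _ (Ideal.mul_mem_right _ _ hp) (Ideal.mul_mem_left _ _ ?_)
        rw [hg]
        simp only [sub_sub_cancel]
        split
        · rw [smul_eq_C_mul]
          exact Ideal.mul_mem_left _ _ (Ideal.subset_span rfl)
        · exact Ideal.zero_mem _
  · have hrw : aeval g a = ∑ i : Fin n, C (coeff (Finsupp.single i 1) a) * g i := by
      conv_lhs => rw [EKlinear_eq_sum ha]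
      rw [map_sum]
      refine Finset.sum_congr rfl fun i _ => ?_
      rw [map_mul, aeval_C, aeval_X, algebraMap_eq]
    rw [hrw]
    have hsplit : ∀ i : Fin n, C (coeff (Finsupp.single i 1) a) * g i
        = C (coeff (Finsupp.single i 1) a) * X i
          - (if i = i₀ then C (coeff (Finsupp.single i 1) a) * (α⁻¹ • a) else 0) := by
      intro i
      rw [hg]
      by_cases hi : i = i₀
      · simp only [if_pos hi]; ring
      · simp only [if_neg hi]; ring
    rw [Finset.sum_congr rfl (fun i _ => hsplit i), Finset.sum_sub_distrib,
      Finset.sum_ite_eq' Finset.univ i₀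
        (fun i => C (coeff (Finsupp.single i 1) a) * (α⁻¹ • a)),
      if_pos (Finset.mem_univ i₀), ← EKlinear_eq_sum ha]
    rw [smul_eq_C_mul, ← hα, ← mul_assoc, ← map_mul, mul_inv_cancel₀, map_one, one_mul, sub_self]
    exact hm
  · intro d f hf
    have := hf.aeval g hglin
    rwa [one_mul] at this

section WithPsi
variable {a : MvP n} {ψ : MvP n →ₐ[ℂ] MvP n}
  (hψ1 : ∀ f, f - ψ f ∈ Ideal.span ({a} : Set (MvP n))) (hψ2 : ψ a = 0)

include hψ1 hψ2 in
lemma EKker_iff (f : MvP n) : ψ f = 0 ↔ f ∈ Ideal.span ({a} : Set (MvP n)) := by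
  constructor
  · intro h
    have := hψ1 f
    rwa [h, sub_zero] at this
  · intro h
    obtain ⟨w, hw⟩ := Ideal.mem_span_singleton'.1 h
    rw [← hw, map_mul, hψ2, mul_zero]

include hψ1 hψ2 in
lemma EKspan_pair_comap (D : MvP n) :
    Ideal.span ({a, D} : Set (MvP n)) = Ideal.comap ψ (Ideal.span {ψ D}) := by
  apply le_antisymm
  · rw [Ideal.span_le]
    rintro x (rfl | rfl)
    · simp only [SetLike.mem_coe, Ideal.mem_comap, hψ2]
      exact Ideal.zero_mem _
    · exact Ideal.subset_span rfl
  · intro f hf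
    rw [Ideal.mem_comap] at hf
    obtain ⟨w, hw⟩ := Ideal.mem_span_singleton'.1 hf
    have h1 : f - ψ f ∈ Ideal.span ({a, D} : Set (MvP n)) := by
      refine Ideal.span_mono ?_ (hψ1 f)
      simp
    have h2 : w * (ψ D - D) ∈ Ideal.span ({a, D} : Set (MvP n)) := by
      refine Ideal.mul_mem_left _ _ ?_
      have h3 : ψ D - D = -(D - ψ D) := by ring
      rw [h3]
      refine neg_mem ?_
      refine Ideal.span_mono ?_ (hψ1 D)
      simp
    have h4 : w * D ∈ Ideal.span ({a, D} : Set (MvP n)) :=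
      Ideal.mul_mem_left _ _ (Ideal.subset_span (by simp))
    have h5 : f = (f - ψ f) + (w * (ψ D - D) + w * D) := by
      rw [← hw]; ring
    rw [h5]
    exact Ideal.add_mem _ h1 (Ideal.add_mem _ h2 h4)

end WithPsi
lemma EKspan_linear_prime {l : MvP n} (hl : l.IsHomogeneous 1) (h0 : l ≠ 0) :
    (Ideal.span ({l} : Set (MvP n))).IsPrime := by
  obtain ⟨ψ, h1, h2, -⟩ := EKexists_psi hl h0
  have heq : Ideal.span ({l} : Set (MvP n)) = RingHom.ker ψ.toRingHom := by
    ext f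
    rw [RingHom.mem_ker]
    exact (EKker_iff h1 h2 f).symm
  rw [heq]
  exact RingHom.ker_isPrime _

lemma EKsmul_of_mem_span {b a : MvP n} (hb : b.IsHomogeneous 1) (ha : a.IsHomogeneous 1)
    (h : b ∈ Ideal.span ({a} : Set (MvP n))) : b ∈ Submodule.span ℂ ({a} : Set (MvP n)) := by
  obtain ⟨e, he, hbe⟩ := EKfactor_of_mem_span (k := 0) hb ha h
  rw [hbe, EKeq_C_of_homog_zero he, mul_comm, ← smul_eq_C_mul]
  exact Submodule.smul_mem _ _ (Submodule.subset_span rfl)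

/-- rank/MS helpers (require defs) -/
lemma EKmem_MS {Q : MvPolynomial (Fin n) ℂ} {af : ℕ → MvPolynomial (Fin n) ℂ}
    (h : IsRep Q (rankS Q) af) {x : MvPolynomial (Fin n) ℂ}
    (hx : x ∈ Submodule.span ℂ (af '' Set.Iio (2 * rankS Q))) : x ∈ MS Q := by
  have hle : Submodule.span ℂ (af '' Set.Iio (2 * rankS Q)) ≤ MS Q := by
    rw [MS]
    exact le_iSup₂ (f := fun af (_ : IsRep Q (rankS Q) af) =>
      Submodule.span ℂ (af '' Set.Iio (2 * rankS Q))) af h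
  exact hle hx

lemma EKrankS_eq {Q : MvPolynomial (Fin n) ℂ} {r : ℕ} {af : ℕ → MvPolynomial (Fin n) ℂ}
    (h : IsRep Q r af) (hlt : ∀ r' < r, ¬ ∃ af', IsRep Q r' af') : rankS Q = r := by
  rw [rankS]
  apply le_antisymm (Nat.sInf_le (show r ∈ {r | ∃ a, IsRep Q r a} from ⟨af, h⟩))
  by_contra hc
  push_neg at hc
  have hmem := Nat.sInf_mem (⟨r, af, h⟩ : Set.Nonempty {r | ∃ a, IsRep Q r a})
  exact hlt _ hc hmem

lemma EKnot_rep_one {Q : MvPolynomial (Fin n) ℂ} (hQ : Irreducible Q)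
    (af : ℕ → MvPolynomial (Fin n) ℂ) : ¬ IsRep Q 1 af := by
  rintro ⟨hlin, hsum⟩
  rw [Finset.sum_range_one] at hsum
  norm_num at hsum
  have h00 : af 0 ≠ 0 := by rintro h; rw [h, zero_mul] at hsum; exact hQ.ne_zero hsum
  have h10 : af 1 ≠ 0 := by rintro h; rw [h, mul_zero] at hsum; exact hQ.ne_zero hsum
  rcases hQ.isUnit_or_isUnit hsum with h | h
  · exact EKnot_isUnit (hlin 0 (by norm_num)) one_ne_zero h00 h
  · exact EKnot_isUnit (hlin 1 (by norm_num)) one_ne_zero h10 h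

lemma EKrank_two {Q u v a e : MvPolynomial (Fin n) ℂ} (hQ : Irreducible Q)
    (hu : IsLinearForm u) (hv : IsLinearForm v) (ha : IsLinearForm a) (he : IsLinearForm e)
    (hfact : Q = u * v + a * e) : a ∈ MS Q := by
  set af : ℕ → MvPolynomial (Fin n) ℂ :=
    fun m => if m = 0 then u else if m = 1 then v else if m = 2 then a else e with haf
  have hrep : IsRep Q 2 af := by
    constructor
    · intro m hm
      interval_cases m
      · simpa [haf] using hu
      · simpa [haf] using hv
      · simpa [haf] using ha
      · simpa [haf] using he
    · rw [Finset.sum_range_succ, Finset.sum_range_one]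
      norm_num [haf]
      exact hfact
  have hrank : rankS Q = 2 := by
    refine EKrankS_eq hrep ?_
    intro r' hr'
    interval_cases r'
    · rintro ⟨af', -, h0⟩
      rw [Finset.range_zero, Finset.sum_empty] at h0
      exact hQ.ne_zero h0
    · rintro ⟨af', haf'⟩
      exact EKnot_rep_one hQ af' haf'
  have hrep' : IsRep Q (rankS Q) af := by rw [hrank]; exact hrep
  refine EKmem_MS hrep' (Submodule.subset_span ⟨2, ?_, ?_⟩)
  · rw [hrank]; norm_num
  · simp [haf]

end EKAux

/-- Observation `gen-case-reducible`: under the EK-quadratics condition,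
for `C ∈ T_k` and `A = a² ∈ T_i` the square of a linear form, either some `T ∈ T_j` equals
`αC + a·b` for a linear form `b`, or `a ∈ MS(C)`, or `C = b²` and some `T ∈ T_j` lies in
`⟨a, b⟩`. -/
theorem gen_case_reducible (n : ℕ) (T : Fin 3 → Finset (MvPolynomial (Fin n) ℂ))
    (hEK : EKQuadCond T)
    (i j k : Fin 3) (hij : i ≠ j) (hjk : j ≠ k) (hik : i ≠ k)
    (C : MvPolynomial (Fin n) ℂ) (hC : C ∈ T k)
    (a : MvPolynomial (Fin n) ℂ) (ha : IsLinearForm a) (hA : a * a ∈ T i) :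
    (∃ T' ∈ T j, ∃ (α : ℂ) (b : MvPolynomial (Fin n) ℂ),
        IsLinearForm b ∧ T' = α • C + a * b) ∨
    a ∈ MS C ∨
    (∃ b : MvPolynomial (Fin n) ℂ, IsLinearForm b ∧ C = b * b ∧
        ∃ T' ∈ T j, T' ∈ Ideal.span ({a, b} : Set (MvPolynomial (Fin n) ℂ))) := by
  by_cases ha0 : a = 0
  · right; left; rw [ha0]; exact (MS C).zero_mem
  have hprod := hEK.2.2 i k j hik (Ne.symm hjk) hij (a * a) hA C hC
  obtain ⟨ψ, hψ1, hψ2, hψ3⟩ := EKexists_psi ha ha0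
  have hC2 : C.IsHomogeneous 2 := by
    rcases hEK.2.1 k C hC with ⟨-, h⟩ | ⟨l, hl, rfl⟩
    · exact h
    · exact hl.mul hl
  rcases hEK.2.1 k C hC with ⟨hirr, -⟩ | ⟨b, hb, hCb⟩
  · -- C irreducible
    by_cases hI : Irreducible (ψ C)
    · -- conclusion 1
      left
      have hP : (Ideal.span ({a, C} : Set (MvPolynomial (Fin n) ℂ))).IsPrime := by
        rw [EKspan_pair_comap hψ1 hψ2 C]
        haveI : (Ideal.span ({ψ C} : Set (MvPolynomial (Fin n) ℂ))).IsPrime :=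
          (Ideal.span_singleton_prime hI.ne_zero).2
            (UniqueFactorizationMonoid.irreducible_iff_prime.1 hI)
        exact Ideal.IsPrime.comap _
      have hsub : Ideal.span ({a * a, C} : Set (MvPolynomial (Fin n) ℂ))
          ≤ Ideal.span ({a, C} : Set (MvPolynomial (Fin n) ℂ)) := by
        rw [Ideal.span_le]
        rintro x (rfl | rfl)
        · exact Ideal.mul_mem_left _ a (Ideal.subset_span (Set.mem_insert _ _))
        · exact Ideal.subset_span (Set.mem_insert_of_mem _ rfl)
      have hin : (∏ Q ∈ T j, Q) ∈ Ideal.span ({a, C} : Set (MvPolynomial (Fin n) ℂ)) := by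
        have := Ideal.radical_mono hsub hprod
        rwa [hP.radical] at this
      haveI := hP
      obtain ⟨T', hT'j, hT'P⟩ := Ideal.IsPrime.prod_mem_iff.1 hin
      have hT'2 : T'.IsHomogeneous 2 := by
        rcases hEK.2.1 j T' hT'j with ⟨-, h⟩ | ⟨l, hl, rfl⟩
        · exact h
        · exact hl.mul hl
      obtain ⟨u, v, huv⟩ := Ideal.mem_span_pair.1 hT'P
      have e1 : homogeneousComponent 2 T' = T' := by
        have := homogeneousComponent_of_mem ((mem_homogeneousSubmodule _ _).2 hT'2) (m := 2)
        rwa [if_pos rfl] at this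
      have e2 : homogeneousComponent 2 (u * a) = homogeneousComponent 1 u * a :=
        EKcomp_mul_right ha 1
      have e3 : homogeneousComponent 2 (v * C) = homogeneousComponent 0 v * C :=
        EKcomp_mul_right hC2 0
      refine ⟨T', hT'j, coeff 0 v, homogeneousComponent 1 u,
        homogeneousComponent_isHomogeneous 1 u, ?_⟩
      calc T' = homogeneousComponent 2 T' := e1.symm
        _ = homogeneousComponent 2 (u * a) + homogeneousComponent 2 (v * C) := by
            rw [← map_add, huv]
        _ = homogeneousComponent 1 u * a + homogeneousComponent 0 v * C := by rw [e2, e3]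
        _ = coeff 0 v • C + a * homogeneousComponent 1 u := by
            rw [homogeneousComponent_zero, smul_eq_C_mul]; ring
    · -- conclusion 2 via rank-2 representation
      right; left
      have hC'2 : (ψ C).IsHomogeneous 2 := hψ3 2 C hC2
      have hC'0 : ψ C ≠ 0 := by
        intro h
        have hCa : C ∈ Ideal.span ({a} : Set (MvPolynomial (Fin n) ℂ)) :=
          (EKker_iff hψ1 hψ2 C).1 h
        obtain ⟨e, he, hCe⟩ := EKfactor_of_mem_span (k := 1) hC2 ha hCa
        have he0 : e ≠ 0 := by rintro rfl; rw [mul_zero] at hCe; exact hirr.ne_zero hCe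
        rcases hirr.isUnit_or_isUnit hCe with h' | h'
        · exact EKnot_isUnit ha one_ne_zero ha0 h'
        · exact EKnot_isUnit he one_ne_zero he0 h'
      obtain ⟨u, v, hu, hv, hC'uv⟩ := EKquad_factor hC'2 hC'0 hI
      have hd : (C - ψ C) ∈ Ideal.span ({a} : Set (MvPolynomial (Fin n) ℂ)) := hψ1 C
      obtain ⟨e, he, hde⟩ := EKfactor_of_mem_span (k := 1) (hC2.sub hC'2) ha hd
      have hfact : C = u * v + a * e := by
        rw [← hC'uv, ← hde]; ring
      exact EKrank_two hirr hu hv ha he hfact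
  · -- C = b * b
    have hb0 : b ≠ 0 := by
      rintro rfl
      rw [mul_zero] at hCb
      have hAa0 : a * a ≠ 0 := mul_ne_zero ha0 ha0
      have hne : a * a ≠ C := fun hEq => hAa0 (hEq.trans hCb)
      exact hEK.1 i (a * a) hA k C hC hne 0 (by rw [hCb, zero_smul])
    by_cases hspan : b ∈ Submodule.span ℂ ({a} : Set (MvPolynomial (Fin n) ℂ))
    · right; left
      obtain ⟨μ, hμ⟩ := Submodule.mem_span_singleton.1 hspan
      have hμ0 : μ ≠ 0 := by rintro rfl; rw [zero_smul] at hμ; exact hb0 hμ.symm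
      set af : ℕ → MvPolynomial (Fin n) ℂ := fun _ => b with haf
      have hrep : IsRep C 1 af := by
        refine ⟨fun _ _ => hb, ?_⟩
        rw [Finset.sum_range_one]
        simpa [haf] using hCb
      have hC0 : C ≠ 0 := by rw [hCb]; exact mul_ne_zero hb0 hb0
      have hrank : rankS C = 1 := by
        refine EKrankS_eq hrep ?_
        intro r' hr'
        interval_cases r'
        rintro ⟨af', -, h0⟩
        rw [Finset.range_zero, Finset.sum_empty] at h0
        exact hC0 h0
      have hrep' : IsRep C (rankS C) af := by rw [hrank]; exact hrep
      have hbmem : b ∈ Submodule.span ℂ (af '' Set.Iio (2 * rankS C)) :=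
        Submodule.subset_span ⟨0, by rw [hrank]; norm_num, rfl⟩
      have haμ : a = μ⁻¹ • b := by rw [← hμ, smul_smul, inv_mul_cancel₀ hμ0, one_smul]
      rw [haμ]
      exact EKmem_MS hrep' (Submodule.smul_mem _ _ hbmem)
    · right; right
      refine ⟨b, hb, hCb, ?_⟩
      have hψb0 : ψ b ≠ 0 := by
        intro h
        exact hspan (EKsmul_of_mem_span hb ha ((EKker_iff hψ1 hψ2 b).1 h))
      have hψblin : (ψ b).IsHomogeneous 1 := hψ3 1 b hb
      have hP : (Ideal.span ({a, b} : Set (MvPolynomial (Fin n) ℂ))).IsPrime := by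
        rw [EKspan_pair_comap hψ1 hψ2 b]
        haveI := EKspan_linear_prime hψblin hψb0
        exact Ideal.IsPrime.comap _
      have hsub : Ideal.span ({a * a, C} : Set (MvPolynomial (Fin n) ℂ))
          ≤ Ideal.span ({a, b} : Set (MvPolynomial (Fin n) ℂ)) := by
        rw [Ideal.span_le]
        rintro x (rfl | rfl)
        · exact Ideal.mul_mem_left _ a (Ideal.subset_span (Set.mem_insert _ _))
        · rw [hCb]
          exact Ideal.mul_mem_left _ b (Ideal.subset_span (Set.mem_insert_of_mem _ rfl))
      have hin : (∏ Q ∈ T j, Q) ∈ Ideal.span ({a, b} : Set (MvPolynomial (Fin n) ℂ)) := by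
        have := Ideal.radical_mono hsub hprod
        rwa [hP.radical] at this
      haveI := hP
      obtain ⟨T', hT'j, hT'P⟩ := Ideal.IsPrime.prod_mem_iff.1 hin
      exact ⟨T', hT'j, hT'P⟩
end
end
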